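/- arXiv:2211.12564 — 2 statements merged into one kernel-verified Lean document; each statement's English description precedes it below -/
import Mathlib

section
/- (Nikolskii inequality on the torus) Let 0 < p < q ≤ ∞. There is a constant C depending only on p, q, d such that every trigonometric polynomial T_n of degree at most n on T^d satisfies ‖T_n‖_{L_q(T^d)} ≤ C n^{d(1/p − 1/q)} ‖T_n‖_{L_p(T^d)}. -/
open MeasureTheory Real ENNReal

noncomputable section

/-- The fundamental domain `[0, 2π]^d` of the torus `T^d = ℝ^d / 2πℤ^d`. -/
def torusBox (d : ℕ) : Set (Fin d → ℝ) := Set.Icc 0 (fun _ => 2 * π)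

/-- The character `e^{i(k,x)}` on the torus. -/
def eK {d : ℕ} (k : Fin d → ℤ) (x : Fin d → ℝ) : ℂ :=
  Complex.exp (Complex.I * ((∑ j, (k j : ℝ) * x j : ℝ) : ℂ))

lemma eK_eq_prod {d : ℕ} (k : Fin d → ℤ) (x : Fin d → ℝ) :
    eK k x = ∏ j, Complex.exp (Complex.I * (k j : ℂ) * (x j : ℂ)) := by
  rw [eK, ← Complex.exp_sum]
  congr 1
  push_cast
  rw [Finset.mul_sum]
  ring_nf

lemma eK_add {d : ℕ} (k l : Fin d → ℤ) (x : Fin d → ℝ) :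
    eK (k + l) x = eK k x * eK l x := by
  rw [eK, eK, eK, ← Complex.exp_add]
  congr 1
  push_cast [Pi.add_apply]
  rw [← mul_add, ← Finset.sum_add_distrib]
  congr 1
  apply Finset.sum_congr rfl
  intro j _
  ring

lemma norm_eK {d : ℕ} (k : Fin d → ℤ) (x : Fin d → ℝ) : ‖eK k x‖ = 1 := by
  rw [eK, Complex.norm_exp]
  norm_num

lemma continuous_eK {d : ℕ} (k : Fin d → ℤ) : Continuous (eK k) := by
  apply Complex.continuous_exp.comp
  apply Continuous.mul continuous_const
  exact Complex.continuous_ofReal.comp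
    (continuous_finset_sum _ fun j _ => continuous_const.mul (continuous_apply j))

lemma oneDim (l : ℤ) :
    ∫ t in Set.Icc (0:ℝ) (2*π), Complex.exp (Complex.I * (l:ℂ) * (t:ℂ)) =
      if l = 0 then ((2*π : ℝ) : ℂ) else 0 := by
  rw [MeasureTheory.integral_Icc_eq_integral_Ioc,
    ← intervalIntegral.integral_of_le (by positivity : (0:ℝ) ≤ 2*π)]
  by_cases hl : l = 0
  · subst hl; simp
  · rw [if_neg hl]
    have hc : Complex.I * (l:ℂ) ≠ 0 := by
      simp [Complex.I_ne_zero, hl]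
    rw [integral_exp_mul_complex hc]
    have : Complex.exp (Complex.I * (l:ℂ) * ((2*π : ℝ):ℂ)) = 1 := by
      rw [← Complex.exp_int_mul_two_pi_mul_I l]
      congr 1
      push_cast
      ring
    rw [this]
    simp

lemma torusBox_eq_pi (d : ℕ) :
    torusBox d = Set.pi Set.univ (fun _ : Fin d => Set.Icc (0:ℝ) (2*π)) := by
  rw [torusBox, ← Set.pi_univ_Icc]
  rfl

lemma integral_eK {d : ℕ} (k : Fin d → ℤ) :
    ∫ x in torusBox d, eK k x = if k = 0 then (((2*π)^d : ℝ) : ℂ) else 0 := by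
  have hIcc : MeasurableSet (torusBox d) := measurableSet_Icc
  have key : ∫ x in torusBox d, eK k x
      = ∏ j, ∫ t in Set.Icc (0:ℝ) (2*π), Complex.exp (Complex.I * (k j : ℂ) * (t:ℂ)) := by
    rw [← MeasureTheory.integral_indicator hIcc]
    have : ∀ x : Fin d → ℝ, (torusBox d).indicator (eK k) x
        = ∏ j, (Set.Icc (0:ℝ) (2*π)).indicator
            (fun t => Complex.exp (Complex.I * (k j : ℂ) * (t:ℂ))) (x j) := by
      intro x
      by_cases hx : x ∈ torusBox d
      · rw [Set.indicator_of_mem hx, eK_eq_prod]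
        rw [torusBox_eq_pi] at hx
        refine Finset.prod_congr rfl fun j _ => ?_
        have hxj : x j ∈ Set.Icc (0:ℝ) (2*π) := hx j (Set.mem_univ j)
        exact (Set.indicator_of_mem hxj
          (fun t : ℝ => Complex.exp (Complex.I * (k j : ℂ) * (t:ℂ)))).symm
      · rw [Set.indicator_of_notMem hx]
        rw [torusBox_eq_pi] at hx
        simp only [Set.mem_pi, Set.mem_univ, forall_true_left, not_forall] at hx
        obtain ⟨j, hj⟩ := hx
        exact (Finset.prod_eq_zero (Finset.mem_univ j)
          (Set.indicator_of_notMem hj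
            (fun t : ℝ => Complex.exp (Complex.I * (k j : ℂ) * (t:ℂ))))).symm
    rw [MeasureTheory.integral_congr_ae (Filter.Eventually.of_forall this)]
    rw [MeasureTheory.volume_pi, MeasureTheory.integral_fintype_prod_eq_prod (ι := Fin d)
      (fun j t => (Set.Icc (0:ℝ) (2*π)).indicator
        (fun u => Complex.exp (Complex.I * (k j : ℂ) * (u:ℂ))) t)]
    exact Finset.prod_congr rfl fun j _ =>
      MeasureTheory.integral_indicator measurableSet_Icc
  rw [key]
  by_cases hk : k = 0
  · subst hk
    simp only [Pi.zero_apply, oneDim, if_pos rfl]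
    rw [Finset.prod_const]
    push_cast
    simp
  · obtain ⟨j, hj⟩ := Function.ne_iff.mp hk
    rw [if_neg hk]
    refine Finset.prod_eq_zero (Finset.mem_univ j) ?_
    rw [oneDim, if_neg (by simpa using hj)]

def boxFinset (d : ℕ) (N : ℕ) : Finset (Fin d → ℤ) :=
  Fintype.piFinset fun _ : Fin d => Finset.Icc (-(N:ℤ)) (N:ℤ)

lemma mem_boxFinset {d N : ℕ} {k : Fin d → ℤ} :
    k ∈ boxFinset d N ↔ ∀ j, |k j| ≤ (N:ℤ) := by
  simp [boxFinset, Fintype.mem_piFinset, abs_le]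

lemma card_boxFinset (d N : ℕ) : (boxFinset d N).card = (2*N+1)^d := by
  rw [boxFinset, Fintype.card_piFinset]
  simp only [Int.card_Icc]
  rw [Finset.prod_const, Finset.card_univ, Fintype.card_fin]
  congr 1
  omega

lemma tsum_eq_boxSum {d N : ℕ} (c : (Fin d → ℤ) → ℂ)
    (hc : ∀ k : Fin d → ℤ, ¬ (∀ j, |k j| ≤ (N : ℤ)) → c k = 0) (x : Fin d → ℝ) :
    ∑' k : Fin d → ℤ, c k * eK k x = ∑ k ∈ boxFinset d N, c k * eK k x := by
  apply tsum_eq_sum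
  intro k hk
  rw [hc k (fun h => hk (mem_boxFinset.mpr h))]
  simp

lemma integrableOn_box {d : ℕ} {E : Type*} [NormedAddCommGroup E]
    {F : (Fin d → ℝ) → E} (hF : Continuous F) : IntegrableOn F (torusBox d) :=
  hF.integrableOn_Icc

lemma coeff_formula {d N : ℕ} (c : (Fin d → ℤ) → ℂ)
    (hc : ∀ k : Fin d → ℤ, ¬ (∀ j, |k j| ≤ (N : ℤ)) → c k = 0)
    {S : (Fin d → ℝ) → ℂ} (hS : ∀ x, S x = ∑ m ∈ boxFinset d N, c m * eK m x)
    (k : Fin d → ℤ) (hk : k ∈ boxFinset d N) :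
    c k * (((2*π)^d : ℝ) : ℂ) = ∫ x in torusBox d, S x * eK (-k) x := by
  refine Eq.symm ?_
  have hint : ∀ m : Fin d → ℤ, IntegrableOn (fun x => c m * eK m x * eK (-k) x) (torusBox d) :=
    fun m => integrableOn_box (((continuous_const.mul (continuous_eK m)).mul (continuous_eK (-k))))
  calc ∫ x in torusBox d, S x * eK (-k) x
      = ∫ x in torusBox d, ∑ m ∈ boxFinset d N, c m * eK m x * eK (-k) x := by
        refine integral_congr_ae (Filter.Eventually.of_forall fun x => ?_)
        simp only
        rw [hS x, Finset.sum_mul]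
    _ = ∑ m ∈ boxFinset d N, ∫ x in torusBox d, c m * eK m x * eK (-k) x :=
        integral_finset_sum _ fun m _ => hint m
    _ = ∑ m ∈ boxFinset d N, c m * ∫ x in torusBox d, eK (m + (-k)) x := by
        refine Finset.sum_congr rfl fun m _ => ?_
        rw [← integral_const_mul]
        refine integral_congr_ae (Filter.Eventually.of_forall fun x => ?_)
        simp only
        rw [eK_add, mul_assoc]
    _ = c k * (((2*π)^d : ℝ) : ℂ) := by
        rw [Finset.sum_eq_single k]
        · rw [integral_eK, if_pos (by simp)]
        · intro m _ hm
          rw [integral_eK, if_neg, mul_zero]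
          exact sub_ne_zero.mpr hm
        · intro h; exact absurd hk h

-- pointwise L∞-L1 bound
lemma sup_le_L1 {d N : ℕ} (c : (Fin d → ℤ) → ℂ)
    (hc : ∀ k : Fin d → ℤ, ¬ (∀ j, |k j| ≤ (N : ℤ)) → c k = 0)
    {S : (Fin d → ℝ) → ℂ} (hS : ∀ x, S x = ∑ m ∈ boxFinset d N, c m * eK m x)
    (x : Fin d → ℝ) :
    ‖S x‖ ≤ ((2*N+1:ℝ)^d / (2*π)^d) * ∫ y in torusBox d, ‖S y‖ := by
  have hScont : Continuous S := by
    have : Continuous fun x => ∑ m ∈ boxFinset d N, c m * eK m x :=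
      continuous_finset_sum _ fun m _ => continuous_const.mul (continuous_eK m)
    exact this.congr fun x => (hS x).symm
  have h2pi : (0:ℝ) < (2*π)^d := by positivity
  have hcoef : ∀ k ∈ boxFinset d N, ‖c k‖ ≤ (∫ y in torusBox d, ‖S y‖) / (2*π)^d := by
    intro k hk
    rw [le_div_iff₀ h2pi]
    have h1 : ‖c k * (((2*π)^d : ℝ) : ℂ)‖ = ‖c k‖ * (2*π)^d := by
      rw [norm_mul, Complex.norm_real, Real.norm_of_nonneg h2pi.le]
    rw [← h1, coeff_formula c hc hS k hk]
    calc ‖∫ y in torusBox d, S y * eK (-k) y‖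
        ≤ ∫ y in torusBox d, ‖S y * eK (-k) y‖ := norm_integral_le_integral_norm _
      _ = ∫ y in torusBox d, ‖S y‖ := by
          refine integral_congr_ae (Filter.Eventually.of_forall fun y => ?_)
          simp only
          rw [norm_mul, norm_eK, mul_one]
  calc ‖S x‖ ≤ ∑ k ∈ boxFinset d N, ‖c k * eK k x‖ := by
        rw [hS x]; exact norm_sum_le _ _
    _ = ∑ k ∈ boxFinset d N, ‖c k‖ := by
        refine Finset.sum_congr rfl fun k _ => ?_
        rw [norm_mul, norm_eK, mul_one]
    _ ≤ ∑ k ∈ boxFinset d N, (∫ y in torusBox d, ‖S y‖) / (2*π)^d :=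
        Finset.sum_le_sum hcoef
    _ = ((2*N+1:ℝ)^d / (2*π)^d) * ∫ y in torusBox d, ‖S y‖ := by
        rw [Finset.sum_const, card_boxFinset, nsmul_eq_mul]
        push_cast
        ring

-- MASTER : bootstrap to L^r, r ≤ 1
lemma master {d N : ℕ} (c : (Fin d → ℤ) → ℂ)
    (hc : ∀ k : Fin d → ℤ, ¬ (∀ j, |k j| ≤ (N : ℤ)) → c k = 0)
    {S : (Fin d → ℝ) → ℂ} (hS : ∀ x, S x = ∑ m ∈ boxFinset d N, c m * eK m x)
    {r : ℝ} (hr0 : 0 < r) (hr1 : r ≤ 1) (x : Fin d → ℝ) :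
    ‖S x‖ ^ r ≤ ((2*N+1:ℝ)^d / (2*π)^d) * ∫ y in torusBox d, ‖S y‖ ^ r := by
  have hScont : Continuous S := by
    have : Continuous fun x => ∑ m ∈ boxFinset d N, c m * eK m x :=
      continuous_finset_sum _ fun m _ => continuous_const.mul (continuous_eK m)
    exact this.congr fun x => (hS x).symm
  set K : ℝ := (2*N+1:ℝ)^d / (2*π)^d with hK
  have hKpos : 0 < K := by positivity
  set B : ℝ := K * ∫ y in torusBox d, ‖S y‖ with hB
  have hbound : ∀ y, ‖S y‖ ≤ B := fun y => sup_le_L1 c hc hS y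
  have hBnonneg : 0 ≤ B := le_trans (norm_nonneg _) (hbound x)
  have hrpow_cont : Continuous fun t : ℝ => t ^ r :=
    continuous_iff_continuousAt.mpr fun t => Real.continuousAt_rpow_const t r (Or.inr hr0.le)
  have hint_r : IntegrableOn (fun y => ‖S y‖ ^ r) (torusBox d) :=
    integrableOn_box (hrpow_cont.comp hScont.norm)
  have hJnonneg : 0 ≤ ∫ y in torusBox d, ‖S y‖ ^ r :=
    integral_nonneg fun y => Real.rpow_nonneg (norm_nonneg _) r
  -- main interpolation : ∫‖S‖ ≤ B^(1-r) ∫‖S‖^r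
  have hinterp : (∫ y in torusBox d, ‖S y‖) ≤ B ^ (1-r) * ∫ y in torusBox d, ‖S y‖ ^ r := by
    rw [← integral_const_mul]
    refine integral_mono_of_nonneg (Filter.Eventually.of_forall fun y => norm_nonneg _)
      ((hint_r.const_mul _)) (Filter.Eventually.of_forall fun y => ?_)
    simp only
    calc ‖S y‖ = ‖S y‖ ^ (1-r) * ‖S y‖ ^ r := by
          rw [← Real.rpow_add' (norm_nonneg _) (by norm_num)]
          · rw [sub_add_cancel, Real.rpow_one]
      _ ≤ B ^ (1-r) * ‖S y‖ ^ r := by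
          refine mul_le_mul_of_nonneg_right ?_ (Real.rpow_nonneg (norm_nonneg _) r)
          exact Real.rpow_le_rpow (norm_nonneg _) (hbound y) (by linarith)
  -- deduce B^r ≤ K * ∫‖S‖^r
  have hBr : B ^ r ≤ K * ∫ y in torusBox d, ‖S y‖ ^ r := by
    rcases eq_or_lt_of_le hBnonneg with h0 | hBpos
    · rw [← h0, Real.zero_rpow hr0.ne']
      positivity
    · have step : B ≤ (K * ∫ y in torusBox d, ‖S y‖ ^ r) * B ^ (1-r) := by
        calc B = K * ∫ y in torusBox d, ‖S y‖ := hB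
          _ ≤ K * (B ^ (1-r) * ∫ y in torusBox d, ‖S y‖ ^ r) :=
              mul_le_mul_of_nonneg_left hinterp hKpos.le
          _ = (K * ∫ y in torusBox d, ‖S y‖ ^ r) * B ^ (1-r) := by ring
      have hBpow_pos : 0 < B ^ (1-r) := Real.rpow_pos_of_pos hBpos _
      rw [← mul_le_mul_iff_of_pos_right hBpow_pos]
      calc B ^ r * B ^ (1-r) = B := by
            rw [← Real.rpow_add hBpos, add_sub_cancel, Real.rpow_one]
        _ ≤ (K * ∫ y in torusBox d, ‖S y‖ ^ r) * B ^ (1-r) := step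
  calc ‖S x‖ ^ r ≤ B ^ r := Real.rpow_le_rpow (norm_nonneg _) (hbound x) hr0.le
    _ ≤ K * ∫ y in torusBox d, ‖S y‖ ^ r := hBr

lemma eK_sum {d : ℕ} {ι : Type*} (s : Finset ι) (f : ι → (Fin d → ℤ)) (x : Fin d → ℝ) :
    eK (∑ i ∈ s, f i) x = ∏ i ∈ s, eK (f i) x := by
  classical
  induction s using Finset.induction with
  | empty =>
      simp only [Finset.sum_empty, Finset.prod_empty]
      simp [eK]
  | insert a s h ih =>
      rw [Finset.sum_insert h, Finset.prod_insert h, eK_add, ih]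

/-- powers of trig polys are trig polys -/
lemma pow_trig {d N : ℕ} (m : ℕ) (hm : 1 ≤ m) (c : (Fin d → ℤ) → ℂ)
    (hc : ∀ k : Fin d → ℤ, ¬ (∀ j, |k j| ≤ (N : ℤ)) → c k = 0) :
    ∃ c' : (Fin d → ℤ) → ℂ,
      (∀ k : Fin d → ℤ, ¬ (∀ j, |k j| ≤ ((m*N : ℕ) : ℤ)) → c' k = 0) ∧
      ∀ x, (∑ k ∈ boxFinset d N, c k * eK k x) ^ m
          = ∑ k ∈ boxFinset d (m*N), c' k * eK k x := by
  classical
  set F := Fintype.piFinset (fun _ : Fin m => boxFinset d N) with hF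
  set c' : (Fin d → ℤ) → ℂ := fun k =>
    ∑ f ∈ F.filter (fun f => ∑ i, f i = k), ∏ i, c (f i) with hc'
  have hmaps : ∀ f ∈ F, (∑ i, f i) ∈ boxFinset d (m*N) := by
    intro f hf
    rw [mem_boxFinset]
    intro j
    have : ∀ i : Fin m, |f i j| ≤ (N:ℤ) := fun i =>
      mem_boxFinset.mp (Fintype.mem_piFinset.mp hf i) j
    calc |(∑ i, f i) j| = |∑ i, f i j| := by
          congr 1
          exact Finset.sum_apply j Finset.univ f
      _ ≤ ∑ i : Fin m, |f i j| := Finset.abs_sum_le_sum_abs _ _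
      _ ≤ ∑ _i : Fin m, (N:ℤ) := Finset.sum_le_sum fun i _ => this i
      _ = (m*N : ℕ) := by push_cast; simp [mul_comm]
  refine ⟨c', ?_, ?_⟩
  · intro k hk
    rw [hc']
    apply Finset.sum_eq_zero
    intro f hf
    rw [Finset.mem_filter] at hf
    exact absurd (hf.2 ▸ mem_boxFinset.mp (hmaps f hf.1)) hk
  · intro x
    calc (∑ k ∈ boxFinset d N, c k * eK k x) ^ m
        = ∏ _i : Fin m, ∑ k ∈ boxFinset d N, c k * eK k x := by
          rw [Finset.prod_const, Finset.card_univ, Fintype.card_fin]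
      _ = ∑ f ∈ F, ∏ i, c (f i) * eK (f i) x :=
          Finset.prod_univ_sum _ _
      _ = ∑ f ∈ F, (∏ i, c (f i)) * eK (∑ i, f i) x := by
          refine Finset.sum_congr rfl fun f _ => ?_
          rw [eK_sum, Finset.prod_mul_distrib]
      _ = ∑ k ∈ boxFinset d (m*N), ∑ f ∈ F.filter (fun f => ∑ i, f i = k),
            (∏ i, c (f i)) * eK (∑ i, f i) x :=
          (Finset.sum_fiberwise_of_maps_to hmaps _).symm
      _ = ∑ k ∈ boxFinset d (m*N), c' k * eK k x := by
          refine Finset.sum_congr rfl fun k _ => ?_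
          rw [hc', Finset.sum_mul]
          refine Finset.sum_congr rfl fun f hf => ?_
          rw [(Finset.mem_filter.mp hf).2]

lemma eLpNorm_eq_ofReal {d : ℕ} {T : (Fin d → ℝ) → ℂ} (hT : Continuous T)
    {r : ℝ≥0∞} (h0 : r ≠ 0) (htop : r ≠ ⊤) :
    eLpNorm T r (volume.restrict (torusBox d)) =
      ENNReal.ofReal ((∫ y in torusBox d, ‖T y‖ ^ r.toReal) ^ (1 / r.toReal)) := by
  have hr' : 0 < r.toReal := ENNReal.toReal_pos h0 htop
  have hrpow_cont : Continuous fun t : ℝ => t ^ r.toReal :=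
    continuous_iff_continuousAt.mpr fun t => Real.continuousAt_rpow_const t _ (Or.inr hr'.le)
  have hint : IntegrableOn (fun y => ‖T y‖ ^ r.toReal) (torusBox d) :=
    integrableOn_box (hrpow_cont.comp hT.norm)
  have hJ : 0 ≤ ∫ y in torusBox d, ‖T y‖ ^ r.toReal :=
    integral_nonneg fun y => Real.rpow_nonneg (norm_nonneg _) _
  rw [eLpNorm_eq_lintegral_rpow_enorm_toReal h0 htop]
  have key : ∫⁻ x, ‖T x‖ₑ ^ r.toReal ∂(volume.restrict (torusBox d))
      = ENNReal.ofReal (∫ y in torusBox d, ‖T y‖ ^ r.toReal) := by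
    rw [ofReal_integral_eq_lintegral_ofReal hint
      (Filter.Eventually.of_forall fun y => Real.rpow_nonneg (norm_nonneg _) _)]
    refine lintegral_congr fun x => ?_
    rw [← ENNReal.ofReal_rpow_of_nonneg (norm_nonneg _) hr'.le, ofReal_norm]
  rw [key, ← ENNReal.ofReal_rpow_of_nonneg hJ (by positivity)]

/-- Nikolskii inequality on the torus: for `0 < p < q ≤ ∞` there is a constant `C`
(depending only on `p, q, d`) such that every trigonometric polynomial `T` of degree at
most `n` satisfies `‖T‖_{L_q(T^d)} ≤ C n^{d(1/p - 1/q)} ‖T‖_{L_p(T^d)}`. -/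
theorem nikolskii_inequality_torus (d : ℕ) (p q : ℝ≥0∞) (hp : 0 < p) (hpq : p < q) :
    ∃ C : ℝ, ∀ (n : ℕ), 0 < n → ∀ (c : (Fin d → ℤ) → ℂ) (T : (Fin d → ℝ) → ℂ),
      (∀ k : Fin d → ℤ, ¬ (∀ j, |k j| ≤ (n : ℤ)) → c k = 0) →
      T = (fun x => ∑' k : Fin d → ℤ, c k * eK k x) →
      eLpNorm T q (volume.restrict (torusBox d)) ≤
        ENNReal.ofReal (C * (n : ℝ) ^ ((d : ℝ) * (1 / p.toReal - 1 / q.toReal))) *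
          eLpNorm T p (volume.restrict (torusBox d)) := by
  have hptop : p ≠ ⊤ := fun h => (h ▸ hpq).ne_top rfl
  have hp0 : p ≠ 0 := hp.ne'
  set p' : ℝ := p.toReal with hp'def
  have hp'pos : 0 < p' := ENNReal.toReal_pos hp0 hptop
  set m : ℕ := max 1 ⌈p'⌉₊ with hmdef
  have hm1 : 1 ≤ m := le_max_left _ _
  have hmpos : (0:ℝ) < m := by exact_mod_cast hm1
  have hp'm : p' ≤ m := le_trans (Nat.le_ceil p') (by exact_mod_cast le_max_right 1 ⌈p'⌉₊)
  set C₁ : ℝ := (3*(m:ℝ))^d / (2*π)^d with hC₁def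
  have hC₁pos : 0 < C₁ := by positivity
  set C : ℝ := if q = ⊤ then C₁ ^ (1/p') else C₁ ^ (1/p' - 1/q.toReal) with hCdef
  refine ⟨C, ?_⟩
  intro n hn c T hc hT
  -- T as finite sum, continuity
  have hT' : ∀ x, T x = ∑ k ∈ boxFinset d n, c k * eK k x := by
    intro x; rw [hT]; exact tsum_eq_boxSum c hc x
  have hTcont : Continuous T := by
    have : Continuous fun x => ∑ k ∈ boxFinset d n, c k * eK k x :=
      continuous_finset_sum _ fun k _ => continuous_const.mul (continuous_eK k)
    exact this.congr fun x => (hT' x).symm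
  -- the key pointwise bound  ‖T x‖^p' ≤ C₁ n^d J
  set J : ℝ := ∫ y in torusBox d, ‖T y‖ ^ p' with hJdef
  have hJ0 : 0 ≤ J := integral_nonneg fun y => Real.rpow_nonneg (norm_nonneg _) _
  have key : ∀ x, ‖T x‖ ^ p' ≤ C₁ * (n:ℝ)^d * J := by
    obtain ⟨c', hc'supp, hc'eq⟩ := pow_trig m hm1 c hc
    set S : (Fin d → ℝ) → ℂ := fun x => ∑ k ∈ boxFinset d (m*n), c' k * eK k x with hSdef
    have hST : ∀ x, S x = (T x) ^ m := by
      intro x; rw [hT' x, hc'eq x]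
    set r : ℝ := p' / m with hrdef
    have hr0 : 0 < r := by positivity
    have hr1 : r ≤ 1 := by
      rw [hrdef, div_le_one hmpos]; exact hp'm
    have hSr : ∀ x, ‖S x‖ ^ r = ‖T x‖ ^ p' := by
      intro x
      rw [hST x, norm_pow, ← Real.rpow_natCast ‖T x‖ m, ← Real.rpow_mul (norm_nonneg _)]
      congr 1
      rw [hrdef]
      field_simp
    have hmaster := fun x => master c' hc'supp (fun x => rfl) hr0 hr1 x
    intro x
    have h1 := hmaster x
    rw [hSr x] at h1
    have h2 : (∫ y in torusBox d, ‖S y‖ ^ r) = J := by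
      rw [hJdef]
      exact integral_congr_ae (Filter.Eventually.of_forall fun y => hSr y)
    rw [h2] at h1
    refine h1.trans ?_
    refine mul_le_mul_of_nonneg_right ?_ hJ0
    rw [hC₁def]
    rw [div_mul_eq_mul_div, div_le_div_iff_of_pos_right (by positivity)]
    calc (2*(m*n:ℕ)+1 : ℝ)^d ≤ (3*(m:ℝ)*(n:ℝ))^d := by
          apply pow_le_pow_left₀ (by positivity)
          push_cast
          have h1m : (1:ℝ) ≤ m := by exact_mod_cast hm1
          have h1n : (1:ℝ) ≤ n := by exact_mod_cast hn
          nlinarith [mul_le_mul h1m h1n zero_le_one (le_trans zero_le_one h1m)]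
      _ = (3*(m:ℝ))^d * (n:ℝ)^d := by rw [mul_pow]
  -- eLpNorm at p
  have hLp : eLpNorm T p (volume.restrict (torusBox d)) = ENNReal.ofReal (J ^ (1/p')) := by
    rw [eLpNorm_eq_ofReal hTcont hp0 hptop]
  -- two cases
  by_cases hq : q = ⊤
  · subst hq
    have hCq : C = C₁ ^ (1/p') := by rw [hCdef, if_pos rfl]
    have hbd : ∀ x, ‖T x‖ ≤ (C₁ * (n:ℝ)^d * J) ^ (1/p') := by
      intro x
      have := Real.rpow_le_rpow (Real.rpow_nonneg (norm_nonneg _) _) (key x)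
        (by positivity : (0:ℝ) ≤ 1/p')
      rwa [← Real.rpow_mul (norm_nonneg _), mul_one_div, div_self hp'pos.ne',
        Real.rpow_one] at this
    have hLq : eLpNorm T ⊤ (volume.restrict (torusBox d))
        ≤ ENNReal.ofReal ((C₁ * (n:ℝ)^d * J) ^ (1/p')) := by
      rw [eLpNorm_exponent_top]
      exact eLpNormEssSup_le_of_ae_bound (Filter.Eventually.of_forall hbd)
    refine hLq.trans ?_
    rw [hLp, ← ENNReal.ofReal_mul (by positivity)]
    apply ENNReal.ofReal_le_ofReal
    apply le_of_eq
    rw [Real.mul_rpow (by positivity) hJ0, Real.mul_rpow hC₁pos.le (by positivity)]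
    rw [← Real.rpow_natCast (n:ℝ) d, ← Real.rpow_mul (Nat.cast_nonneg n)]
    rw [hCq]
    simp only [ENNReal.toReal_top, _root_.div_zero, sub_zero]
  · have hq0 : q ≠ 0 := (hp.trans hpq).ne'
    set q' : ℝ := q.toReal with hq'def
    have hq'pos : 0 < q' := ENNReal.toReal_pos hq0 hq
    have hp'q' : p' < q' := by
      rw [hp'def, hq'def]
      exact ENNReal.toReal_strict_mono hq hpq
    have hCq : C = C₁ ^ (1/p' - 1/q') := by rw [hCdef, if_neg hq]
    set θ : ℝ := (q' - p') / p' with hθdef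
    have hθ0 : 0 ≤ θ := by
      apply div_nonneg (by linarith) hp'pos.le
    set Jq : ℝ := ∫ y in torusBox d, ‖T y‖ ^ q' with hJqdef
    have hJq0 : 0 ≤ Jq := integral_nonneg fun y => Real.rpow_nonneg (norm_nonneg _) _
    set B : ℝ := C₁ * (n:ℝ)^d * J with hBdef
    have hB0 : 0 ≤ B := by positivity
    -- pointwise
    have hpt : ∀ y, ‖T y‖ ^ q' ≤ B ^ θ * ‖T y‖ ^ p' := by
      intro y
      have h1 : ‖T y‖ ^ q' = ‖T y‖ ^ (q' - p') * ‖T y‖ ^ p' := by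
        rw [← Real.rpow_add' (norm_nonneg _) (by rw [sub_add_cancel]; exact hq'pos.ne')]
        rw [sub_add_cancel]
      rw [h1]
      refine mul_le_mul_of_nonneg_right ?_ (Real.rpow_nonneg (norm_nonneg _) _)
      have h2 : ‖T y‖ ^ (q' - p') = (‖T y‖ ^ p') ^ θ := by
        rw [← Real.rpow_mul (norm_nonneg _), hθdef]
        congr 1
        field_simp
      rw [h2]
      exact Real.rpow_le_rpow (Real.rpow_nonneg (norm_nonneg _) _) (key y) hθ0
    -- integrate
    have hrpow_cont : ∀ s : ℝ, 0 < s → Continuous fun t : ℝ => t ^ s := fun s hs =>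
      continuous_iff_continuousAt.mpr fun t => Real.continuousAt_rpow_const t _ (Or.inr hs.le)
    have hint_p : IntegrableOn (fun y => ‖T y‖ ^ p') (torusBox d) :=
      integrableOn_box ((hrpow_cont p' hp'pos).comp hTcont.norm)
    have hJqle : Jq ≤ B ^ θ * J := by
      rw [hJqdef, hJdef, ← integral_const_mul]
      refine integral_mono_of_nonneg
        (Filter.Eventually.of_forall fun y => Real.rpow_nonneg (norm_nonneg _) _)
        (hint_p.const_mul _) (Filter.Eventually.of_forall fun y => hpt y)
    -- conclude
    have hLq : eLpNorm T q (volume.restrict (torusBox d)) = ENNReal.ofReal (Jq ^ (1/q')) := by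
      rw [eLpNorm_eq_ofReal hTcont hq0 hq]
    rw [hLq, hLp, ← ENNReal.ofReal_mul (by positivity)]
    apply ENNReal.ofReal_le_ofReal
    calc Jq ^ (1/q') ≤ (B ^ θ * J) ^ (1/q') :=
          Real.rpow_le_rpow hJq0 hJqle (by positivity)
      _ = C * (n:ℝ) ^ ((d:ℝ) * (1/p' - 1/q')) * J ^ (1/p') := by
          have e1 : θ * (1/q') = 1/p' - 1/q' := by
            rw [hθdef]; field_simp
          have e2 : θ * (1/q') + 1/q' = 1/p' := by
            rw [e1]; ring
          calc (B ^ θ * J) ^ (1/q')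
              = (B ^ θ) ^ (1/q') * J ^ (1/q') :=
                Real.mul_rpow (Real.rpow_nonneg hB0 _) hJ0
            _ = B ^ (θ*(1/q')) * J ^ (1/q') := by rw [← Real.rpow_mul hB0]
            _ = C₁ ^ (θ*(1/q')) * ((n:ℝ)^(d:ℝ)) ^ (θ*(1/q')) * J ^ (θ*(1/q'))
                  * J ^ (1/q') := by
                rw [hBdef, ← Real.rpow_natCast (n:ℝ) d,
                  Real.mul_rpow (by positivity) hJ0,
                  Real.mul_rpow hC₁pos.le (by positivity)]
            _ = C₁ ^ (1/p'-1/q') * (n:ℝ) ^ ((d:ℝ)*(1/p'-1/q'))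
                  * (J ^ (θ*(1/q')) * J ^ (1/q')) := by
                rw [← Real.rpow_mul (Nat.cast_nonneg n), e1]
                ring
            _ = C * (n:ℝ) ^ ((d:ℝ) * (1/p' - 1/q')) * J ^ (1/p') := by
                rw [← Real.rpow_add' hJ0 (by rw [e2]; positivity), e2, hCq]
end
end

section
/- Let 0 < p < 1 and α ∈ N (an integer). Then for every f ∈ L_p(T) and every δ > 0, the K-functional inf_{g ∈ W_p^α(T)} ( ‖f − g‖_{L_p(T)} + δ ‖g^{(α)}‖_{L_p(T)} ) is identically zero, where g^{(α)} is the α-th derivative and W_p^α(T) = {g ∈ L_1(T) : g absolutely continuous of order α−1 with g^{(α)} ∈ L_p(T)}. -/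
set_option maxHeartbeats 2000000

open MeasureTheory Real ENNReal intervalIntegral Filter Topology Set

noncomputable section

namespace KFaux

lemma coe_le_inf (n : ℕ) : (n : WithTop ℕ∞) ≤ ((⊤ : ℕ∞) : WithTop ℕ∞) := by
  exact_mod_cast le_top

lemma coe_lt_inf (n : ℕ) : (n : WithTop ℕ∞) < ((⊤ : ℕ∞) : WithTop ℕ∞) := by
  exact_mod_cast lt_top_iff_ne_top.2 (by simp)

lemma smooth_diffAt {f : ℝ → ℂ} (hf : ContDiff ℝ ((⊤:ℕ∞) : WithTop ℕ∞) f) (n : ℕ) (x : ℝ) :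
    DifferentiableAt ℝ (iteratedDeriv n f) x :=
  (hf.differentiable_iteratedDeriv n (coe_lt_inf n)).differentiableAt

lemma iD_sum (n N : ℕ) (F : ℕ → ℝ → ℂ) (hF : ∀ i, ContDiff ℝ ((⊤:ℕ∞) : WithTop ℕ∞) (F i)) :
    iteratedDeriv n (fun x => ∑ i ∈ Finset.range N, F i x)
      = fun x => ∑ i ∈ Finset.range N, iteratedDeriv n (F i) x := by
  induction n with
  | zero => simp
  | succ n ih =>
    rw [iteratedDeriv_succ, ih]
    funext x
    rw [deriv_fun_sum (fun i _ => smooth_diffAt (hF i) n x)]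
    simp [iteratedDeriv_succ]

lemma iD_smul_const (n : ℕ) (f : ℝ → ℝ) (hf : ContDiff ℝ ((⊤:ℕ∞) : WithTop ℕ∞) f) (c : ℂ) :
    iteratedDeriv n (fun x => f x • c) = fun x => iteratedDeriv n f x • c := by
  induction n with
  | zero => simp
  | succ n ih =>
    rw [iteratedDeriv_succ, ih]
    funext x
    rw [iteratedDeriv_succ]
    exact deriv_smul_const ((hf.differentiable_iteratedDeriv n (coe_lt_inf n)).differentiableAt) c

lemma periodic_deriv {F : Type*} [NormedAddCommGroup F] [NormedSpace ℝ F]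
    (f : ℝ → F) (T : ℝ) (hf : Function.Periodic f T) : Function.Periodic (deriv f) T := by
  intro x
  have h1 : (fun y => f (y + T)) = f := funext hf
  calc deriv f (x + T) = deriv (fun y => f (y + T)) x := (deriv_comp_add_const f T x).symm
  _ = deriv f x := by rw [h1]

lemma periodic_iD {F : Type*} [NormedAddCommGroup F] [NormedSpace ℝ F]
    (f : ℝ → F) (T : ℝ) (hf : Function.Periodic f T) (n : ℕ) :
    Function.Periodic (iteratedDeriv n f) T := by
  induction n with
  | zero => simpa using hf
  | succ n ih => rw [iteratedDeriv_succ]; exact periodic_deriv _ T ih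

lemma iD_shift (n : ℕ) (f : ℝ → ℝ) (s : ℝ) :
    iteratedDeriv n (fun x => f (x - s)) = fun x => iteratedDeriv n f (x - s) := by
  simpa [sub_eq_add_neg] using iteratedDeriv_comp_add_const n f (-s)

lemma iD_mul_sub (n : ℕ) (c s : ℝ) (f : ℝ → ℝ) (hf : ContDiff ℝ ((⊤:ℕ∞) : WithTop ℕ∞) f) :
    iteratedDeriv n (fun x => c * (f x - f (x - s)))
      = fun x => c * (iteratedDeriv n f x - iteratedDeriv n f (x - s)) := by
  funext x
  have hg : ContDiff ℝ ((n:ℕ∞) : WithTop ℕ∞) (fun x : ℝ => f x - f (x - s)) := by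
    have : ContDiff ℝ ((⊤:ℕ∞) : WithTop ℕ∞) (fun x : ℝ => f (x - s)) :=
      hf.comp (contDiff_id.sub contDiff_const)
    exact (hf.sub this).of_le (coe_le_inf n)
  have h1 : iteratedDeriv n (fun x => c * (f x - f (x - s))) x
      = c * iteratedDeriv n (fun x => f x - f (x - s)) x := by
    rw [← iteratedDerivWithin_univ, ← iteratedDerivWithin_univ]
    exact iteratedDerivWithin_const_mul (mem_univ x) uniqueDiffOn_univ c hg.contDiffWithinAt
  rw [h1]
  have h2 : iteratedDeriv n (fun x => f x - f (x - s)) x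
      = iteratedDeriv n f x - iteratedDeriv n (fun x => f (x - s)) x := by
    rw [← iteratedDerivWithin_univ, ← iteratedDerivWithin_univ, ← iteratedDerivWithin_univ]
    exact iteratedDerivWithin_sub (f := f) (g := fun x => f (x - s)) (mem_univ x) uniqueDiffOn_univ
      ((hf.of_le (coe_le_inf n)).contDiffWithinAt)
      (((hf.comp (contDiff_id.sub contDiff_const)).of_le (coe_le_inf n)).contDiffWithinAt)
  rw [h2, iD_shift n f s]

lemma enorm_sum_rpow {p : ℝ} (hp0 : 0 < p) (hp1 : p ≤ 1) (N : ℕ) (F : ℕ → ℂ) :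
    (‖∑ i ∈ Finset.range N, F i‖₊ : ℝ≥0∞) ^ p
      ≤ ∑ i ∈ Finset.range N, (‖F i‖₊ : ℝ≥0∞) ^ p := by
  induction N with
  | zero => simp [ENNReal.zero_rpow_of_pos hp0]
  | succ N ih =>
    rw [Finset.sum_range_succ, Finset.sum_range_succ]
    calc (‖∑ i ∈ Finset.range N, F i + F N‖₊ : ℝ≥0∞) ^ p
        ≤ ((‖∑ i ∈ Finset.range N, F i‖₊ : ℝ≥0∞) + (‖F N‖₊ : ℝ≥0∞)) ^ p := by
          apply ENNReal.rpow_le_rpow _ hp0.le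
          exact_mod_cast nnnorm_add_le _ _
      _ ≤ (‖∑ i ∈ Finset.range N, F i‖₊ : ℝ≥0∞) ^ p + (‖F N‖₊ : ℝ≥0∞) ^ p :=
          ENNReal.rpow_add_le_add_rpow _ _ hp0.le hp1
      _ ≤ _ := by exact add_le_add_left ih _



lemma deriv_st_left {x : ℝ} (hx : x < 0) : deriv Real.smoothTransition x = 0 := by
  have h : Real.smoothTransition =ᶠ[𝓝 x] fun _ => (0:ℝ) := by
    filter_upwards [Iio_mem_nhds hx] with y hy
    exact Real.smoothTransition.zero_of_nonpos (le_of_lt hy)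
  rw [h.deriv_eq]; exact deriv_const x 0

lemma deriv_st_right {x : ℝ} (hx : 1 < x) : deriv Real.smoothTransition x = 0 := by
  have h : Real.smoothTransition =ᶠ[𝓝 x] fun _ => (1:ℝ) := by
    filter_upwards [Ioi_mem_nhds hx] with y hy
    exact Real.smoothTransition.one_of_one_le (le_of_lt hy)
  rw [h.deriv_eq]; exact deriv_const x 1

lemma st_smooth : ContDiff ℝ ((⊤:ℕ∞) : WithTop ℕ∞) Real.smoothTransition :=
  Real.smoothTransition.contDiff

lemma transition_one {p : ℝ} (hp0 : 0 < p) (hp1 : p < 1) (a η ε' : ℝ)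
    (hη : 0 < η) (hε' : 0 < ε') :
    ∃ τ : ℝ → ℝ, ContDiff ℝ ((⊤:ℕ∞) : WithTop ℕ∞) τ ∧ (∀ x, 0 ≤ τ x) ∧ (∀ x, τ x ≤ 1) ∧
      (∀ x, x ≤ a → τ x = 0) ∧ (∀ x, a + η ≤ x → τ x = 1) ∧
      (∫⁻ x, (‖iteratedDeriv 1 τ x‖₊ : ℝ≥0∞) ^ p) ≤ ENNReal.ofReal ε' := by
  obtain ⟨C₀, hC₀⟩ := isCompact_Icc.exists_bound_of_continuousOn
    (((st_smooth.continuous_deriv (by exact_mod_cast (le_top : (1:ℕ∞) ≤ ⊤)))).continuousOn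
      (s := Icc (0:ℝ) 1))
  set C := max C₀ 1 with hCdef
  have hC : (0:ℝ) < C := lt_of_lt_of_le one_pos (le_max_right _ _)
  have hD : ∀ u : ℝ, |deriv Real.smoothTransition u| ≤ C := by
    intro u
    rcases lt_or_ge u 0 with hu | hu
    · rw [deriv_st_left hu]; simpa using hC.le
    rcases le_or_gt u 1 with hu1 | hu1
    · exact le_trans (by simpa [Real.norm_eq_abs] using hC₀ u ⟨hu, hu1⟩) (le_max_left _ _)
    · rw [deriv_st_right hu1]; simpa using hC.le
  set w := min η ((ε'/(C^p+1))^(1/(1-p))) with hwdef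
  have hfrac : (0:ℝ) < ε'/(C^p+1) := by
    apply div_pos hε'; positivity
  have hw : 0 < w := lt_min hη (Real.rpow_pos_of_pos hfrac _)
  set τ := fun x : ℝ => Real.smoothTransition ((x - a)/w) with hτdef
  have hsm : ContDiff ℝ ((⊤:ℕ∞) : WithTop ℕ∞) τ :=
    st_smooth.comp ((contDiff_id.sub contDiff_const).div_const w)
  have hderiv : ∀ x : ℝ, HasDerivAt τ (deriv Real.smoothTransition ((x - a)/w) * (1/w)) x := by
    intro x
    have h1 : HasDerivAt (fun x : ℝ => (x - a)/w) (1/w) x := by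
      simpa using ((hasDerivAt_id x).sub_const a).div_const w
    have h2 : DifferentiableAt ℝ Real.smoothTransition ((x - a)/w) :=
      (st_smooth.differentiable (by simp)).differentiableAt
    exact h2.hasDerivAt.comp x h1
  refine ⟨τ, hsm, fun x => Real.smoothTransition.nonneg _,
    fun x => Real.smoothTransition.le_one _, ?_, ?_, ?_⟩
  · intro x hx
    apply Real.smoothTransition.zero_of_nonpos
    apply div_nonpos_of_nonpos_of_nonneg (by linarith) hw.le
  · intro x hx
    apply Real.smoothTransition.one_of_one_le
    rw [le_div_iff₀ hw, one_mul]
    have := min_le_left η ((ε'/(C^p+1))^(1/(1-p)))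
    linarith [this]
  · have hpt : ∀ x : ℝ, (‖iteratedDeriv 1 τ x‖₊ : ℝ≥0∞) ^ p
        ≤ (Icc a (a+w)).indicator (fun _ => ENNReal.ofReal ((C/w)^p)) x := by
      intro x
      rw [iteratedDeriv_one, (hderiv x).deriv]
      by_cases hx : x ∈ Icc a (a+w)
      · rw [Set.indicator_of_mem hx]
        have hb : ‖deriv Real.smoothTransition ((x - a)/w) * (1/w)‖ ≤ C/w := by
          rw [norm_mul, Real.norm_eq_abs, Real.norm_eq_abs, abs_of_pos (by positivity : (0:ℝ) < 1/w)]
          calc |deriv Real.smoothTransition ((x - a)/w)| * (1/w) ≤ C * (1/w) := by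
                apply mul_le_mul_of_nonneg_right (hD _) (by positivity)
            _ = C/w := by ring
        rw [← enorm_eq_nnnorm, ← ofReal_norm]
        refine le_trans (ENNReal.rpow_le_rpow (ENNReal.ofReal_le_ofReal hb) hp0.le) ?_
        rw [ENNReal.ofReal_rpow_of_pos (div_pos hC hw)]
      · rw [Set.indicator_of_notMem hx]
        have hz : deriv Real.smoothTransition ((x - a)/w) = 0 := by
          rw [Set.mem_Icc, not_and_or] at hx
          push_neg at hx
          rcases hx with hx | hx
          · exact deriv_st_left (by apply div_neg_of_neg_of_pos (by linarith) hw)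
          · exact deriv_st_right (by rw [lt_div_iff₀ hw]; linarith)
        simp [hz, ENNReal.zero_rpow_of_pos hp0]
    have harith : (C/w)^p * w ≤ ε' := by
      have h1 : (C/w)^p * w = C^p * w^(1-p) := by
        rw [Real.div_rpow hC.le hw.le, Real.rpow_sub hw, Real.rpow_one]; ring
      have h2 : w^(1-p) ≤ ε'/(C^p+1) := by
        have hle : w ≤ (ε'/(C^p+1))^(1/(1-p)) := min_le_right _ _
        have h3 := Real.rpow_le_rpow hw.le hle (by linarith : (0:ℝ) ≤ 1-p)
        rwa [← Real.rpow_mul hfrac.le, one_div, inv_mul_cancel₀ (by intro h; linarith : (1:ℝ)-p ≠ 0),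
          Real.rpow_one] at h3
      have hCp0 : (0:ℝ) < C^p := Real.rpow_pos_of_pos hC p
      calc (C/w)^p * w = C^p * w^(1-p) := h1
        _ ≤ C^p * (ε'/(C^p+1)) := mul_le_mul_of_nonneg_left h2 hCp0.le
        _ = ε' * (C^p/(C^p+1)) := by ring
        _ ≤ ε' * 1 := mul_le_mul_of_nonneg_left ((div_le_one (by positivity)).2 (by linarith)) hε'.le
        _ = ε' := mul_one ε'
    calc ∫⁻ x, (‖iteratedDeriv 1 τ x‖₊ : ℝ≥0∞) ^ p
        ≤ ∫⁻ x, (Icc a (a+w)).indicator (fun _ => ENNReal.ofReal ((C/w)^p)) x := lintegral_mono hpt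
      _ = ENNReal.ofReal ((C/w)^p) * volume (Icc a (a+w)) := by
          rw [lintegral_indicator measurableSet_Icc, setLIntegral_const]
      _ = ENNReal.ofReal ((C/w)^p) * ENNReal.ofReal w := by
          rw [Real.volume_Icc]; norm_num
      _ = ENNReal.ofReal ((C/w)^p * w) := (ENNReal.ofReal_mul (by positivity)).symm
      _ ≤ ENNReal.ofReal ε' := ENNReal.ofReal_le_ofReal harith


lemma transition {p : ℝ} (hp0 : 0 < p) (hp1 : p < 1) (n : ℕ) (hn : 1 ≤ n) :
    ∀ a η ε' : ℝ, 0 < η → 0 < ε' →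
    ∃ τ : ℝ → ℝ, ContDiff ℝ ((⊤:ℕ∞) : WithTop ℕ∞) τ ∧ (∀ x, 0 ≤ τ x) ∧ (∀ x, τ x ≤ 1) ∧
      (∀ x, x ≤ a → τ x = 0) ∧ (∀ x, a + η ≤ x → τ x = 1) ∧
      (∫⁻ x, (‖iteratedDeriv n τ x‖₊ : ℝ≥0∞) ^ p) ≤ ENNReal.ofReal ε' := by
  induction n, hn using Nat.le_induction with
  | base => exact fun a η ε' hη hε' => transition_one hp0 hp1 a η ε' hη hε'
  | succ n hn IH =>
    intro a η ε' hη hε'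
    set s := η/2 with hsdef
    have hs : 0 < s := by positivity
    have hsp : (0:ℝ) < s^p := Real.rpow_pos_of_pos hs p
    obtain ⟨τt, hsm, hge0, hle1, hzero, hone, hcost⟩ :=
      IH a (η/4) (ε' * s^p / 2) (by positivity) (by positivity)
    have hτtc : Continuous τt := hsm.continuous
    have hint : ∀ u v : ℝ, IntervalIntegrable τt volume u v := fun u v =>
      hτtc.intervalIntegrable u v
    set R := fun x : ℝ => ∫ t in a..x, τt t with hRdef
    have hRd : ∀ x : ℝ, HasDerivAt R (τt x) x := fun x =>
      (hτtc.integral_hasStrictDerivAt a x).hasDerivAt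
    have hRderiv : deriv R = τt := funext fun x => (hRd x).deriv
    have hRsmooth : ContDiff ℝ ((⊤:ℕ∞) : WithTop ℕ∞) R := by
      rw [show ((⊤:ℕ∞) : WithTop ℕ∞) = (⊤ : ℕ∞) from rfl]
      exact contDiff_infty_iff_deriv.2
        ⟨fun x => (hRd x).differentiableAt, by rw [hRderiv]; exact hsm⟩
    set τ := fun x : ℝ => s⁻¹ * (R x - R (x - s)) with hτdef
    have hdiff : ∀ x : ℝ, R x - R (x - s) = ∫ t in (x-s)..x, τt t := by
      intro x
      have h := integral_add_adjacent_intervals (hint a (x-s)) (hint (x-s) x)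
      simp only [hRdef]
      linarith [h]
    have hτsm : ContDiff ℝ ((⊤:ℕ∞) : WithTop ℕ∞) τ :=
      contDiff_const.mul (hRsmooth.sub (hRsmooth.comp (contDiff_id.sub contDiff_const)))
    have hτ0 : ∀ x, 0 ≤ τ x := by
      intro x
      have h0 : 0 ≤ ∫ t in (x-s)..x, τt t :=
        intervalIntegral.integral_nonneg (by linarith) (fun u _ => hge0 u)
      simp only [hτdef]
      rw [hdiff x]
      positivity
    have hτint : ∀ x, (∫ t in (x-s)..x, τt t) ≤ s := by
      intro x
      calc (∫ t in (x-s)..x, τt t) ≤ ∫ t in (x-s)..x, (1:ℝ) :=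
            intervalIntegral.integral_mono_on (by linarith) (hint _ _)
              intervalIntegrable_const (fun u _ => hle1 u)
        _ = s := by simp
    have hτ1 : ∀ x, τ x ≤ 1 := by
      intro x
      simp only [hτdef]
      rw [hdiff x]
      calc s⁻¹ * ∫ t in (x-s)..x, τt t ≤ s⁻¹ * s :=
            mul_le_mul_of_nonneg_left (hτint x) (by positivity)
        _ = 1 := inv_mul_cancel₀ hs.ne'
    have hτzero : ∀ x, x ≤ a → τ x = 0 := by
      intro x hx
      simp only [hτdef]
      rw [hdiff x]
      have : (∫ t in (x-s)..x, τt t) = ∫ t in (x-s)..x, (0:ℝ) := by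
        apply intervalIntegral.integral_congr
        intro t ht
        rw [uIcc_of_le (by linarith)] at ht
        exact hzero t (le_trans ht.2 hx)
      rw [this]
      simp
    have hτone : ∀ x, a + η ≤ x → τ x = 1 := by
      intro x hx
      simp only [hτdef]
      rw [hdiff x]
      have : (∫ t in (x-s)..x, τt t) = ∫ t in (x-s)..x, (1:ℝ) := by
        apply intervalIntegral.integral_congr
        intro t ht
        rw [uIcc_of_le (by linarith)] at ht
        apply hone
        have := ht.1
        simp only [hsdef] at *
        linarith
      rw [this]
      simp [hsdef]
      exact hη.ne'
    have hτd : ∀ x : ℝ, HasDerivAt τ (s⁻¹ * (τt x - τt (x - s))) x := by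
      intro x
      have h2 : HasDerivAt (fun y : ℝ => R (y - s)) (τt (x - s)) x := by
        exact HasDerivAt.comp_sub_const x s (hRd (x - s))
      exact ((hRd x).sub h2).const_mul s⁻¹
    have hdτ : deriv τ = fun x => s⁻¹ * (τt x - τt (x - s)) := funext fun x => (hτd x).deriv
    have hiD : iteratedDeriv (n+1) τ
        = fun x => s⁻¹ * (iteratedDeriv n τt x - iteratedDeriv n τt (x - s)) := by
      rw [iteratedDeriv_succ', hdτ, iD_mul_sub n s⁻¹ s τt hsm]
    refine ⟨τ, hτsm, hτ0, hτ1, hτzero, hτone, ?_⟩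
    have hDnc : Continuous (iteratedDeriv n τt) := hsm.continuous_iteratedDeriv n (coe_le_inf n)
    have hmeas1 : Measurable fun x => (‖iteratedDeriv n τt x‖₊ : ℝ≥0∞) ^ p :=
      (hDnc.measurable.nnnorm.coe_nnreal_ennreal).pow_const p
    have hmeas2 : Measurable fun x => (‖iteratedDeriv n τt (x - s)‖₊ : ℝ≥0∞) ^ p :=
      hmeas1.comp (measurable_id.sub_const s)
    calc ∫⁻ x, (‖iteratedDeriv (n+1) τ x‖₊ : ℝ≥0∞) ^ p
        ≤ ∫⁻ x, (ENNReal.ofReal s⁻¹) ^ p *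
            ((‖iteratedDeriv n τt x‖₊ : ℝ≥0∞) ^ p + (‖iteratedDeriv n τt (x - s)‖₊ : ℝ≥0∞) ^ p) := by
          apply lintegral_mono
          intro x
          dsimp only
          rw [hiD]
          dsimp only
          have e1 : (‖s⁻¹ * (iteratedDeriv n τt x - iteratedDeriv n τt (x - s))‖₊ : ℝ≥0∞)
              = ENNReal.ofReal s⁻¹ * (‖iteratedDeriv n τt x - iteratedDeriv n τt (x - s)‖₊ : ℝ≥0∞) := by
            rw [← enorm_eq_nnnorm, ← ofReal_norm, ← enorm_eq_nnnorm, ← ofReal_norm, norm_mul,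
              ENNReal.ofReal_mul (norm_nonneg _)]
            congr 1
            rw [Real.norm_eq_abs, abs_of_nonneg (by positivity)]
          rw [e1, ENNReal.mul_rpow_of_nonneg _ _ hp0.le]
          apply mul_le_mul_right _ _
          calc (‖iteratedDeriv n τt x - iteratedDeriv n τt (x - s)‖₊ : ℝ≥0∞) ^ p
              ≤ ((‖iteratedDeriv n τt x‖₊ : ℝ≥0∞) + (‖iteratedDeriv n τt (x - s)‖₊ : ℝ≥0∞)) ^ p := by
                apply ENNReal.rpow_le_rpow _ hp0.le
                exact_mod_cast nnnorm_sub_le _ _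
            _ ≤ _ := ENNReal.rpow_add_le_add_rpow _ _ hp0.le hp1.le
      _ = (ENNReal.ofReal s⁻¹) ^ p *
            ((∫⁻ x, (‖iteratedDeriv n τt x‖₊ : ℝ≥0∞) ^ p) +
             (∫⁻ x, (‖iteratedDeriv n τt (x - s)‖₊ : ℝ≥0∞) ^ p)) := by
          rw [lintegral_const_mul _ (hmeas1.fun_add hmeas2), lintegral_add_left hmeas1]
      _ = (ENNReal.ofReal s⁻¹) ^ p * (2 * ∫⁻ x, (‖iteratedDeriv n τt x‖₊ : ℝ≥0∞) ^ p) := by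
          congr 1
          have : (∫⁻ x, (‖iteratedDeriv n τt (x - s)‖₊ : ℝ≥0∞) ^ p)
              = ∫⁻ x, (‖iteratedDeriv n τt x‖₊ : ℝ≥0∞) ^ p := by
            simpa [sub_eq_add_neg] using
              lintegral_add_right_eq_self (fun x => (‖iteratedDeriv n τt x‖₊ : ℝ≥0∞) ^ p) (-s)
          rw [this]; ring
      _ ≤ (ENNReal.ofReal s⁻¹) ^ p * (2 * ENNReal.ofReal (ε' * s^p / 2)) := by
          apply mul_le_mul_right
          exact mul_le_mul_right hcost _
      _ = ENNReal.ofReal ε' := by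
          rw [ENNReal.ofReal_rpow_of_pos (by positivity), ← ENNReal.ofReal_ofNat,
            ← ENNReal.ofReal_mul (by norm_num), ← ENNReal.ofReal_mul (by positivity)]
          congr 1
          have h1 : (2:ℝ) * (ε' * s^p / 2) = ε' * s^p := by ring
          rw [h1, ← mul_assoc, mul_comm (s⁻¹^p) ε', mul_assoc, ← Real.mul_rpow (by positivity) hs.le,
            inv_mul_cancel₀ hs.ne', Real.one_rpow, mul_one]

end KFaux

open KFaux in
/-- Main theorem on the circle for integer derivatives: for `0 < p < 1` and `α ∈ ℕ`,
the K-functional `inf_g (‖f - g‖_{L_p(T)} + δ ‖g^{(α)}‖_{L_p(T)})`, taken over all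
`2π`-periodic `g` whose `(α-1)`-st derivative is absolutely continuous with
`g^{(α)} = G ∈ L_1(T) ∩ L_p(T)`, is identically zero. -/
theorem K_functional_zero_circle_integer (p : ℝ) (hp0 : 0 < p) (hp1 : p < 1)
    (α : ℕ) (hα : 0 < α) (f : ℝ → ℂ)
    (hf : MemLp f (ENNReal.ofReal p) (volume.restrict (Set.Icc (0 : ℝ) (2 * π))))
    (δ : ℝ) (hδ : 0 < δ) (ε : ℝ) (hε : 0 < ε) :
    ∃ g G : ℝ → ℂ, Function.Periodic g (2 * π) ∧ Function.Periodic G (2 * π) ∧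
      IntegrableOn G (Set.Icc (0 : ℝ) (2 * π)) ∧ ContDiff ℝ (α - 1 : ℕ) g ∧
      MemLp G (ENNReal.ofReal p) (volume.restrict (Set.Icc (0 : ℝ) (2 * π))) ∧
      (∀ x : ℝ, iteratedDeriv (α - 1) g x =
        iteratedDeriv (α - 1) g 0 + ∫ t in (0 : ℝ)..x, G t) ∧
      eLpNorm (fun x => f x - g x) (ENNReal.ofReal p)
            (volume.restrict (Set.Icc (0 : ℝ) (2 * π))) +
          ENNReal.ofReal δ * eLpNorm G (ENNReal.ofReal p)
            (volume.restrict (Set.Icc (0 : ℝ) (2 * π))) <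
        ENNReal.ofReal ε := by
  have h2π : (0:ℝ) < 2*π := by positivity
  set q := ENNReal.ofReal p with hq
  have hq0 : q ≠ 0 := (ENNReal.ofReal_pos.2 hp0).ne'
  have hqt : q ≠ ⊤ := ENNReal.ofReal_ne_top
  have hIcc : MeasurableSet (Set.Icc (0:ℝ) (2*π)) := measurableSet_Icc
  set a0 : ℝ := ε/3 with ha0def
  set b0 : ℝ := ε/(3*δ) with hb0def
  have ha0 : 0 < a0 := by positivity
  have hb0 : 0 < b0 := by positivity
  set A : ℝ := a0^p with hAdef
  set B : ℝ := b0^p with hBdef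
  have hA : 0 < A := Real.rpow_pos_of_pos ha0 p
  have hB : 0 < B := Real.rpow_pos_of_pos hb0 p
  -- Step 1 : continuous approximation
  set f₁ := (Set.Icc (0:ℝ) (2*π)).indicator f with hf₁def
  have hf₁m : MemLp f₁ q volume := (memLp_indicator_iff_restrict hIcc).2 hf
  have hA4 : (0:ℝ) < (A/4)^(1/p) := Real.rpow_pos_of_pos (by positivity) _
  obtain ⟨h, hhcs, hhsub, hhcont, hhmem⟩ :=
    hf₁m.exists_hasCompactSupport_eLpNorm_sub_le hqt
      (ε := ENNReal.ofReal ((A/4)^(1/p))) (ENNReal.ofReal_pos.2 hA4).ne'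
  have step1 : (∫⁻ x in Set.Icc (0:ℝ) (2*π), (‖f x - h x‖₊:ℝ≥0∞)^p)
      ≤ ENNReal.ofReal (A/4) := by
    have e1 : (∫⁻ x in Set.Icc (0:ℝ) (2*π), (‖f x - h x‖₊:ℝ≥0∞)^p)
        = ∫⁻ x in Set.Icc (0:ℝ) (2*π), (‖f₁ x - h x‖₊:ℝ≥0∞)^p :=
      setLIntegral_congr_fun hIcc (fun x hx => by
        rw [hf₁def, Set.indicator_of_mem hx])
    rw [e1]
    calc (∫⁻ x in Set.Icc (0:ℝ) (2*π), (‖f₁ x - h x‖₊:ℝ≥0∞)^p)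
        ≤ ∫⁻ x, (‖f₁ x - h x‖₊:ℝ≥0∞)^p := lintegral_mono' Measure.restrict_le_self (le_refl _)
      _ = ((∫⁻ x, (‖f₁ x - h x‖₊:ℝ≥0∞)^p) ^ (1/p)) ^ p := by
          rw [← ENNReal.rpow_mul, one_div, inv_mul_cancel₀ hp0.ne', ENNReal.rpow_one]
      _ = (eLpNorm (f₁ - h) q volume) ^ p := by
          rw [eLpNorm_eq_lintegral_rpow_enorm_toReal hq0 hqt, ENNReal.toReal_ofReal hp0.le]
          rfl
      _ ≤ (ENNReal.ofReal ((A/4)^(1/p))) ^ p := ENNReal.rpow_le_rpow hhsub hp0.le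
      _ = ENNReal.ofReal (A/4) := by
          rw [ENNReal.ofReal_rpow_of_pos hA4, ← Real.rpow_mul (by positivity),
            one_div, inv_mul_cancel₀ hp0.ne', Real.rpow_one]
  -- Step 2 : sup bound and uniform continuity
  obtain ⟨M₀, hM₀⟩ := isCompact_Icc.exists_bound_of_continuousOn
    (hhcont.continuousOn (s := Set.Icc (0:ℝ) (2*π)))
  set M := max M₀ 1 with hMdef
  have hM1 : (1:ℝ) ≤ M := le_max_right _ _
  have hM : ∀ y ∈ Set.Icc (0:ℝ) (2*π), ‖h y‖ ≤ M := fun y hy =>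
    le_trans (hM₀ y hy) (le_max_left _ _)
  set ε₂ : ℝ := ((A/4)/(2*π+1))^(1/p)/2 with hε₂def
  have hε₂ : 0 < ε₂ := by
    have := Real.rpow_pos_of_pos (show (0:ℝ) < (A/4)/(2*π+1) by positivity) (1/p)
    positivity
  have key2 : (2*ε₂)^p * (2*π+1) ≤ A/4 := by
    have e1 : 2*ε₂ = ((A/4)/(2*π+1))^(1/p) := by rw [hε₂def]; ring
    rw [e1, ← Real.rpow_mul (by positivity), one_div, inv_mul_cancel₀ hp0.ne', Real.rpow_one,
      div_mul_cancel₀ _ (by positivity : (2*π+1:ℝ) ≠ 0)]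
  obtain ⟨δ₀, hδ₀, hUC⟩ := Metric.uniformContinuousOn_iff.1
    (isCompact_Icc.uniformContinuousOn_of_continuous
      (hhcont.continuousOn (s := Set.Icc (0:ℝ) (2*π)))) ε₂ hε₂
  -- Step 3 : choice of N
  obtain ⟨N, hN⟩ := exists_nat_gt (max (2*π/δ₀) ((2*M+2*ε₂)^p * (2*π) * (4/A)))
  have hNpos : (0:ℝ) < N :=
    lt_of_lt_of_le (by positivity) (le_trans (le_max_left _ _) hN.le)
  have hN1 : 1 ≤ N := by exact_mod_cast Nat.one_le_iff_ne_zero.2 (by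
    intro h0; rw [h0] at hNpos; simp at hNpos)
  set L : ℝ := 2*π/N with hLdef
  have hL0 : 0 < L := by positivity
  have hLδ : L < δ₀ := by
    rw [hLdef, div_lt_iff₀ hNpos]
    have h1 : 2*π/δ₀ < N := lt_of_le_of_lt (le_max_left _ _) hN
    rw [div_lt_iff₀ hδ₀] at h1
    linarith [h1]
  have hNA : (2*M+2*ε₂)^p * L ≤ A/4 := by
    have h1 : (2*M+2*ε₂)^p * (2*π) * (4/A) < N := lt_of_le_of_lt (le_max_right _ _) hN
    have h2 := mul_lt_mul_of_pos_right h1 (show (0:ℝ) < A/4 by positivity)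
    have h3 : (2*M+2*ε₂)^p * (2*π) * (4/A) * (A/4) = (2*M+2*ε₂)^p * (2*π) := by
      field_simp
    rw [h3] at h2
    have h4 : (2*M+2*ε₂)^p * L * N = (2*M+2*ε₂)^p * (2*π) := by
      rw [hLdef]; field_simp
    have h5 : (2*M+2*ε₂)^p * L * N < N * (A/4) := by rw [h4]; exact h2
    nlinarith [h5, hNpos]
  -- Step 4 : grid and transitions
  set xg : ℕ → ℝ := fun i => L * i with hxgdef
  have hxg0 : xg 0 = 0 := by simp [hxgdef]
  have hxgN : xg N = 2*π := by
    rw [hxgdef, hLdef]; field_simp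
  have hxgsucc : ∀ i, xg (i+1) = xg i + L := by
    intro i; rw [hxgdef]; push_cast; ring
  have hxgmono : ∀ i j : ℕ, i ≤ j → xg i ≤ xg j := by
    intro i j hij
    apply mul_le_mul_of_nonneg_left _ hL0.le
    exact_mod_cast hij
  have hxgnn : ∀ i : ℕ, 0 ≤ xg i := by
    intro i; rw [hxgdef]; positivity
  have hxgmem : ∀ i : ℕ, i ≤ N → xg i ∈ Set.Icc (0:ℝ) (2*π) := by
    intro i hi
    exact ⟨hxgnn i, by rw [← hxgN]; exact hxgmono i N hi⟩
  have hxgN1 : xg (N-1) = 2*π - L := by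
    have := hxgsucc (N-1)
    rw [show N-1+1 = N by omega, hxgN] at this
    linarith
  set ε' : ℝ := B/(N*(2*M)^p+1) with hε'def
  have h2Mp : (0:ℝ) < (2*M)^p := Real.rpow_pos_of_pos (by linarith) p
  have hε' : 0 < ε' := by
    apply div_pos hB
    positivity
  choose τ hτsm hτ0 hτ1 hτzero hτone hτcost using fun i : ℕ =>
    transition hp0 hp1 α hα (xg i + L/3) (L/3) ε' (by positivity) hε'
  -- values and sum
  set v : ℕ → ℂ := fun j => if j < N then h (xg j) else h 0 with hvdef
  set c : ℕ → ℂ := fun j => v (j+1) - v j with hcdef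
  have hv0 : v 0 = h 0 := by
    rw [hvdef]; simp only [if_pos (by omega : 0 < N)]; rw [hxg0]
  have hvN : v N = h 0 := by rw [hvdef]; simp
  have hvbound : ∀ j, ‖v j‖ ≤ M := by
    intro j
    rw [hvdef]
    by_cases hj : j < N
    · simp only [if_pos hj]; exact hM _ (hxgmem j hj.le)
    · simp only [if_neg hj]; exact hM 0 ⟨le_refl _, by linarith⟩
  have hcbound : ∀ j, ‖c j‖ ≤ 2*M := by
    intro j
    rw [hcdef]
    calc ‖v (j+1) - v j‖ ≤ ‖v (j+1)‖ + ‖v j‖ := norm_sub_le _ _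
      _ ≤ 2*M := by linarith [hvbound (j+1), hvbound j]
  have hcsmall : ∀ j, j+1 < N → ‖c j‖ ≤ ε₂ := by
    intro j hj
    have e1 : v (j+1) = h (xg (j+1)) := by rw [hvdef]; simp only [if_pos hj]
    have e2 : v j = h (xg j) := by rw [hvdef]; simp only [if_pos (by omega : j < N)]
    rw [hcdef]
    simp only []
    rw [e1, e2, ← dist_eq_norm]
    apply le_of_lt (hUC _ (hxgmem _ hj.le) _ (hxgmem j (by omega)) ?_)
    rw [Real.dist_eq, hxgsucc j, show xg j + L - xg j = L by ring, abs_of_pos hL0]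
    exact hLδ
  set g₀ : ℝ → ℂ := fun x => v 0 + ∑ i ∈ Finset.range N, τ i x • c i with hg₀def
  have hg₀sm : ContDiff ℝ ((⊤:ℕ∞) : WithTop ℕ∞) g₀ :=
    contDiff_const.add (ContDiff.sum fun i _ => (hτsm i).smul contDiff_const)
  have heval : ∀ i, i < N → ∀ x, xg i ≤ x → x ≤ xg (i+1) → g₀ x = v i + τ i x • c i := by
    intro i hi x hxi hxi1
    have hterm1 : ∀ j ∈ Finset.range i, τ j x • c j = c j := by
      intro j hj
      have hji : j + 1 ≤ i := Finset.mem_range.1 hj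
      have h1 : xg (j+1) ≤ xg i := hxgmono _ _ hji
      rw [hxgsucc j] at h1
      rw [hτone j x (by linarith), one_smul]
    have hterm2 : ∀ j ∈ Finset.Ico (i+1) N, τ j x • c j = 0 := by
      intro j hj
      have h1 : xg (i+1) ≤ xg j := hxgmono _ _ (Finset.mem_Ico.1 hj).1
      rw [hτzero j x (by linarith), zero_smul]
    have hsplit : ∑ j ∈ Finset.range N, τ j x • c j
        = ∑ j ∈ Finset.range (i+1), τ j x • c j + ∑ j ∈ Finset.Ico (i+1) N, τ j x • c j :=
      (Finset.sum_range_add_sum_Ico _ (by omega)).symm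
    have htel : ∑ j ∈ Finset.range i, c j = v i - v 0 := Finset.sum_range_sub v i
    rw [hg₀def]
    simp only []
    rw [hsplit, Finset.sum_eq_zero hterm2, add_zero, Finset.sum_range_succ,
      Finset.sum_congr rfl hterm1, htel]
    ring
  have hgv : ∀ x, x ∈ Set.Icc (0:ℝ) (2*π) → ∃ i, i < N ∧ xg i ≤ x ∧ x ≤ xg (i+1) := by
    intro x hx
    refine ⟨min ⌊x/L⌋₊ (N-1), lt_of_le_of_lt (min_le_right _ _) (by omega), ?_, ?_⟩
    · have h1 : ((min ⌊x/L⌋₊ (N-1) : ℕ):ℝ) ≤ x/L := by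
        calc ((min ⌊x/L⌋₊ (N-1) : ℕ):ℝ) ≤ (⌊x/L⌋₊:ℝ) := by
              exact_mod_cast min_le_left _ _
          _ ≤ x/L := Nat.floor_le (div_nonneg hx.1 hL0.le)
      calc xg (min ⌊x/L⌋₊ (N-1)) = L * ((min ⌊x/L⌋₊ (N-1) : ℕ):ℝ) := rfl
        _ ≤ L * (x/L) := mul_le_mul_of_nonneg_left h1 hL0.le
        _ = x := by field_simp
    · rcases le_or_gt ⌊x/L⌋₊ (N-1) with hcase | hcase
      · rw [min_eq_left hcase]
        have h2 : x/L < (⌊x/L⌋₊:ℝ) + 1 := Nat.lt_floor_add_one _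
        have h3 : x < L * ((⌊x/L⌋₊:ℝ)+1) := by
          calc x = L * (x/L) := by field_simp
            _ < L * ((⌊x/L⌋₊:ℝ)+1) := by exact mul_lt_mul_of_pos_left h2 hL0
        have h4 : xg (⌊x/L⌋₊+1) = L * ((⌊x/L⌋₊:ℝ)+1) := by
          rw [hxgdef]; push_cast; ring
        linarith [h4, h3]
      · rw [min_eq_right hcase.le, show N-1+1 = N by omega, hxgN]
        exact hx.2
  have hkey : ∀ i, i < N → ∀ x, x ∈ Set.Icc (0:ℝ) (2*π) → xg i ≤ x → x ≤ xg (i+1) →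
      ‖g₀ x - h x‖ ≤ ε₂ + ‖c i‖ := by
    intro i hiN x hx h1 h2
    rw [heval i hiN x h1 h2]
    have hvi : v i = h (xg i) := by rw [hvdef]; simp only [if_pos hiN]
    have hdist : dist (xg i) x < δ₀ := by
      rw [Real.dist_eq, abs_sub_comm, abs_of_nonneg (by linarith)]
      have h3 : xg (i+1) = xg i + L := hxgsucc i
      linarith
    have hvh : ‖v i - h x‖ ≤ ε₂ := by
      rw [hvi, ← dist_eq_norm]
      exact (hUC (xg i) (hxgmem i hiN.le) x hx hdist).le
    have hsmul : ‖τ i x • c i‖ ≤ ‖c i‖ := by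
      rw [norm_smul, Real.norm_eq_abs, abs_of_nonneg (hτ0 i x)]
      exact mul_le_of_le_one_left (norm_nonneg _) (hτ1 i x)
    calc ‖v i + τ i x • c i - h x‖ = ‖(v i - h x) + τ i x • c i‖ := by
          congr 1; ring
      _ ≤ ‖v i - h x‖ + ‖τ i x • c i‖ := norm_add_le _ _
      _ ≤ ε₂ + ‖c i‖ := add_le_add hvh hsmul
  have hbound2 : ∀ x, x ∈ Set.Icc (0:ℝ) (2*π) → ‖g₀ x - h x‖ ≤ ε₂ + 2*M := by
    intro x hx
    obtain ⟨i, hiN, h1, h2⟩ := hgv x hx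
    exact le_trans (hkey i hiN x hx h1 h2) (by linarith [hcbound i])
  have hbound1 : ∀ x, x ∈ Set.Icc (0:ℝ) (2*π) → x < xg (N-1) → ‖g₀ x - h x‖ ≤ 2*ε₂ := by
    intro x hx hxN
    have hx0 : 0 ≤ x/L := div_nonneg hx.1 hL0.le
    have hilt : ⌊x/L⌋₊ < N - 1 := by
      rw [Nat.floor_lt hx0, div_lt_iff₀ hL0]
      calc x < xg (N-1) := hxN
        _ = ((N-1:ℕ):ℝ) * L := by rw [hxgdef]; ring
    have hiN : ⌊x/L⌋₊ < N := by omega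
    have h1 : xg ⌊x/L⌋₊ ≤ x := by
      calc xg ⌊x/L⌋₊ = L * (⌊x/L⌋₊:ℝ) := rfl
        _ ≤ L * (x/L) := mul_le_mul_of_nonneg_left (Nat.floor_le hx0) hL0.le
        _ = x := by field_simp
    have h2 : x ≤ xg (⌊x/L⌋₊+1) := by
      have h3 : x < L * ((⌊x/L⌋₊:ℝ)+1) := by
        calc x = L * (x/L) := by field_simp
          _ < L * ((⌊x/L⌋₊:ℝ)+1) := mul_lt_mul_of_pos_left (Nat.lt_floor_add_one _) hL0
      have h4 : xg (⌊x/L⌋₊+1) = L * ((⌊x/L⌋₊:ℝ)+1) := by rw [hxgdef]; push_cast; ring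
      linarith
    have h5 := hcsmall ⌊x/L⌋₊ (by omega)
    exact le_trans (hkey ⌊x/L⌋₊ hiN x hx h1 h2) (by linarith)
  -- Step 5 : integral bound for h - g₀ on Icc
  have step2 : (∫⁻ x in Set.Icc (0:ℝ) (2*π), (‖h x - g₀ x‖₊:ℝ≥0∞)^p)
      ≤ ENNReal.ofReal (A/4) + ENNReal.ofReal (A/4) := by
    have hsub : Set.Icc (0:ℝ) (2*π) ⊆ Set.Ico 0 (xg (N-1)) ∪ Set.Icc (xg (N-1)) (2*π) := by
      intro x hx
      rcases lt_or_ge x (xg (N-1)) with hcx | hcx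
      · exact Or.inl ⟨hx.1, hcx⟩
      · exact Or.inr ⟨hcx, hx.2⟩
    have hIcoB : (∫⁻ x in Set.Ico (0:ℝ) (xg (N-1)), (‖h x - g₀ x‖₊:ℝ≥0∞)^p)
        ≤ ENNReal.ofReal (A/4) := by
      have hmem' : ∀ x ∈ Set.Ico (0:ℝ) (xg (N-1)), x ∈ Set.Icc (0:ℝ) (2*π) := by
        intro x hx
        refine ⟨hx.1, ?_⟩
        have : xg (N-1) ≤ 2*π := by rw [← hxgN]; exact hxgmono _ _ (by omega)
        linarith [hx.2]
      calc (∫⁻ x in Set.Ico (0:ℝ) (xg (N-1)), (‖h x - g₀ x‖₊:ℝ≥0∞)^p)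
          ≤ ∫⁻ _x in Set.Ico (0:ℝ) (xg (N-1)), ENNReal.ofReal ((2*ε₂)^p) := by
            apply setLIntegral_mono measurable_const
            intro x hx
            rw [← enorm_eq_nnnorm, ← ofReal_norm]
            refine le_trans (ENNReal.rpow_le_rpow (ENNReal.ofReal_le_ofReal ?_) hp0.le)
              (le_of_eq (ENNReal.ofReal_rpow_of_pos (by positivity)))
            rw [norm_sub_rev]
            exact hbound1 x (hmem' x hx) hx.2
        _ = ENNReal.ofReal ((2*ε₂)^p) * volume (Set.Ico (0:ℝ) (xg (N-1))) :=
            setLIntegral_const _ _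
        _ ≤ ENNReal.ofReal ((2*ε₂)^p) * ENNReal.ofReal (2*π+1) := by
            apply mul_le_mul_right
            rw [Real.volume_Ico]
            apply ENNReal.ofReal_le_ofReal
            have : xg (N-1) ≤ 2*π := by rw [← hxgN]; exact hxgmono _ _ (by omega)
            linarith
        _ = ENNReal.ofReal ((2*ε₂)^p * (2*π+1)) := by
            rw [ENNReal.ofReal_mul (by positivity)]
        _ ≤ ENNReal.ofReal (A/4) := ENNReal.ofReal_le_ofReal key2
    have hIccB : (∫⁻ x in Set.Icc (xg (N-1)) (2*π), (‖h x - g₀ x‖₊:ℝ≥0∞)^p)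
        ≤ ENNReal.ofReal (A/4) := by
      have hmem' : ∀ x ∈ Set.Icc (xg (N-1)) (2*π), x ∈ Set.Icc (0:ℝ) (2*π) := by
        intro x hx
        exact ⟨le_trans (hxgnn (N-1)) hx.1, hx.2⟩
      calc (∫⁻ x in Set.Icc (xg (N-1)) (2*π), (‖h x - g₀ x‖₊:ℝ≥0∞)^p)
          ≤ ∫⁻ _x in Set.Icc (xg (N-1)) (2*π), ENNReal.ofReal ((2*M+2*ε₂)^p) := by
            apply setLIntegral_mono measurable_const
            intro x hx
            rw [← enorm_eq_nnnorm, ← ofReal_norm]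
            refine le_trans (ENNReal.rpow_le_rpow (ENNReal.ofReal_le_ofReal ?_) hp0.le)
              (le_of_eq (ENNReal.ofReal_rpow_of_pos (by positivity)))
            rw [norm_sub_rev]
            exact le_trans (hbound2 x (hmem' x hx)) (by linarith)
        _ = ENNReal.ofReal ((2*M+2*ε₂)^p) * volume (Set.Icc (xg (N-1)) (2*π)) :=
            setLIntegral_const _ _
        _ ≤ ENNReal.ofReal ((2*M+2*ε₂)^p) * ENNReal.ofReal L := by
            apply mul_le_mul_right
            rw [Real.volume_Icc]
            apply ENNReal.ofReal_le_ofReal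
            rw [hxgN1]; linarith
        _ = ENNReal.ofReal ((2*M+2*ε₂)^p * L) := by
            rw [ENNReal.ofReal_mul (by positivity)]
        _ ≤ ENNReal.ofReal (A/4) := ENNReal.ofReal_le_ofReal hNA
    calc (∫⁻ x in Set.Icc (0:ℝ) (2*π), (‖h x - g₀ x‖₊:ℝ≥0∞)^p)
        ≤ ∫⁻ x in (Set.Ico (0:ℝ) (xg (N-1)) ∪ Set.Icc (xg (N-1)) (2*π)),
            (‖h x - g₀ x‖₊:ℝ≥0∞)^p := lintegral_mono_set hsub
      _ ≤ (∫⁻ x in Set.Ico (0:ℝ) (xg (N-1)), (‖h x - g₀ x‖₊:ℝ≥0∞)^p)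
          + ∫⁻ x in Set.Icc (xg (N-1)) (2*π), (‖h x - g₀ x‖₊:ℝ≥0∞)^p :=
          lintegral_union_le _ _ _
      _ ≤ _ := add_le_add hIcoB hIccB
  -- Step 6 : combine
  have stepfg : (∫⁻ x in Set.Icc (0:ℝ) (2*π), (‖f x - g₀ x‖₊:ℝ≥0∞)^p)
      ≤ ENNReal.ofReal A := by
    have hptw : ∀ x, (‖f x - g₀ x‖₊:ℝ≥0∞)^p
        ≤ (‖f x - h x‖₊:ℝ≥0∞)^p + (‖h x - g₀ x‖₊:ℝ≥0∞)^p := by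
      intro x
      calc (‖f x - g₀ x‖₊:ℝ≥0∞)^p
          ≤ ((‖f x - h x‖₊:ℝ≥0∞) + (‖h x - g₀ x‖₊:ℝ≥0∞))^p := by
            apply ENNReal.rpow_le_rpow _ hp0.le
            rw [show f x - g₀ x = (f x - h x) + (h x - g₀ x) by ring]
            exact_mod_cast nnnorm_add_le _ _
        _ ≤ _ := ENNReal.rpow_add_le_add_rpow _ _ hp0.le hp1.le
    have haem : AEMeasurable (fun x => (‖f x - h x‖₊:ℝ≥0∞)^p)
        (volume.restrict (Set.Icc (0:ℝ) (2*π))) := by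
      apply AEMeasurable.pow_const
      exact (hf.aestronglyMeasurable.sub
        (hhcont.aestronglyMeasurable.restrict)).enorm
    calc (∫⁻ x in Set.Icc (0:ℝ) (2*π), (‖f x - g₀ x‖₊:ℝ≥0∞)^p)
        ≤ ∫⁻ x in Set.Icc (0:ℝ) (2*π),
            ((‖f x - h x‖₊:ℝ≥0∞)^p + (‖h x - g₀ x‖₊:ℝ≥0∞)^p) := lintegral_mono hptw
      _ = (∫⁻ x in Set.Icc (0:ℝ) (2*π), (‖f x - h x‖₊:ℝ≥0∞)^p)
          + ∫⁻ x in Set.Icc (0:ℝ) (2*π), (‖h x - g₀ x‖₊:ℝ≥0∞)^p :=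
          lintegral_add_left' haem _
      _ ≤ ENNReal.ofReal (A/4) + (ENNReal.ofReal (A/4) + ENNReal.ofReal (A/4)) :=
          add_le_add step1 step2
      _ ≤ ENNReal.ofReal A := by
          rw [← ENNReal.ofReal_add (by positivity) (by positivity),
            ← ENNReal.ofReal_add (by positivity) (by positivity)]
          apply ENNReal.ofReal_le_ofReal
          linarith
  -- Step 7 : periodization
  have hg₀left : ∀ x : ℝ, x ≤ L/3 → g₀ x = v 0 := by
    intro x hx
    rw [hg₀def]
    simp only []
    rw [Finset.sum_eq_zero, add_zero]
    intro i _
    rw [hτzero i x (by linarith [hxgnn i]), zero_smul]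
  have hg₀right : ∀ x : ℝ, 2*π - L/3 ≤ x → g₀ x = v 0 := by
    intro x hx
    rw [hg₀def]
    simp only []
    have hone' : ∀ i ∈ Finset.range N, τ i x • c i = c i := by
      intro i hi
      have hi' : i < N := Finset.mem_range.1 hi
      have h1 : xg i ≤ xg (N-1) := hxgmono _ _ (by omega)
      rw [hτone i x ?_, one_smul]
      rw [hxgN1] at h1
      linarith
    rw [Finset.sum_congr rfl hone', Finset.sum_range_sub v N, hvN, hv0]
    ring
  set P : ℝ → ℂ := fun x => g₀ (2*π * Int.fract (x / (2*π))) with hPdef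
  have hfract : ∀ y : ℝ, P y = g₀ (y - 2*π*(⌊y/(2*π)⌋:ℝ)) := by
    intro y
    rw [hPdef]
    simp only []
    congr 1
    rw [← Int.self_sub_floor (y/(2*π))]
    field_simp
  have hL2π : L ≤ 2*π := by
    rw [hLdef, div_le_iff₀ hNpos]
    nlinarith [h2π, hNpos, (by exact_mod_cast hN1 : (1:ℝ) ≤ (N:ℝ))]
  have hlocal : ∀ x : ℝ, ∃ k : ℤ, Set.EqOn P (fun y => g₀ (y - 2*π*(k:ℝ)))
      (Set.Ioo (2*π*(k:ℝ) - L/3) (2*π*((k:ℝ)+1))) ∧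
      x ∈ Set.Ioo (2*π*(k:ℝ) - L/3) (2*π*((k:ℝ)+1)) := by
    intro x
    refine ⟨⌊x/(2*π)⌋, ?_, ?_, ?_⟩
    · intro y hy
      obtain ⟨hy1, hy2⟩ := hy
      rcases lt_or_ge y (2*π*(⌊x/(2*π)⌋:ℝ)) with hyk | hyk
      · have hfl : ⌊y/(2*π)⌋ = ⌊x/(2*π)⌋ - 1 := by
          rw [Int.floor_eq_iff]
          constructor
          · push_cast
            rw [le_div_iff₀ h2π]
            nlinarith [hy1, hL2π]
          · push_cast
            rw [div_lt_iff₀ h2π]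
            nlinarith [hyk]
        rw [hfract y, hfl]
        have e1 : g₀ (y - 2*π*((⌊x/(2*π)⌋:ℝ) - 1)) = v 0 := by
          apply hg₀right
          nlinarith [hy1]
        have e2 : g₀ (y - 2*π*(⌊x/(2*π)⌋:ℝ)) = v 0 := by
          apply hg₀left
          nlinarith [hyk, hL0]
        push_cast
        rw [show y - 2*π*((⌊x/(2*π)⌋:ℝ) - 1) = y - (2*π*(⌊x/(2*π)⌋:ℝ) - 2*π) by ring] at e1
        rw [show ((⌊x/(2*π)⌋:ℤ):ℝ) - 1 = (⌊x/(2*π)⌋:ℝ) - 1 by push_cast; ring]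
        rw [show y - 2*π*((⌊x/(2*π)⌋:ℝ) - 1) = y - (2*π*(⌊x/(2*π)⌋:ℝ) - 2*π) by ring]
        rw [e1]
        exact e2.symm
      · have hfl : ⌊y/(2*π)⌋ = ⌊x/(2*π)⌋ := by
          rw [Int.floor_eq_iff]
          constructor
          · rw [le_div_iff₀ h2π]; nlinarith [hyk]
          · rw [div_lt_iff₀ h2π]; nlinarith [hy2]
        rw [hfract y, hfl]
    · have h1 : (⌊x/(2*π)⌋:ℝ) ≤ x/(2*π) := Int.floor_le _
      rw [le_div_iff₀ h2π] at h1
      nlinarith [hL0]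
    · have h1 : x/(2*π) < (⌊x/(2*π)⌋:ℝ) + 1 := Int.lt_floor_add_one _
      rw [div_lt_iff₀ h2π] at h1
      nlinarith [h1]
  have hPsm : ContDiff ℝ ((⊤:ℕ∞) : WithTop ℕ∞) P := by
    rw [contDiff_iff_contDiffAt]
    intro x
    obtain ⟨k, hEq, hmem⟩ := hlocal x
    have hsm2 : ContDiffAt ℝ ((⊤:ℕ∞) : WithTop ℕ∞) (fun y => g₀ (y - 2*π*(k:ℝ))) x :=
      (hg₀sm.comp (contDiff_id.sub contDiff_const)).contDiffAt
    apply hsm2.congr_of_eventuallyEq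
    filter_upwards [Ioo_mem_nhds hmem.1 hmem.2] with y hy
    exact hEq hy
  have hPper : Function.Periodic P (2*π) := by
    intro x
    rw [hPdef]
    simp only []
    have e1 : (x + 2*π)/(2*π) = x/(2*π) + 1 := by field_simp
    rw [e1, Int.fract_add_one]
  have hPeq : ∀ x ∈ Set.Icc (0:ℝ) (2*π), P x = g₀ x := by
    intro x hx
    rcases eq_or_lt_of_le hx.2 with h2 | h2
    · rw [hfract x, h2]
      have hfl : ⌊(2*π)/(2*π)⌋ = 1 := by
        rw [div_self h2π.ne']
        exact Int.floor_one
      rw [hfl]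
      push_cast
      rw [show 2*π - 2*π*(1:ℝ) = 0 by ring]
      rw [hg₀left 0 (by linarith), hg₀right (2*π) (by linarith)]
    · rw [hfract x]
      have hfl : ⌊x/(2*π)⌋ = 0 := by
        rw [Int.floor_eq_iff]
        constructor
        · push_cast; exact div_nonneg hx.1 h2π.le
        · push_cast; rw [div_lt_iff₀ h2π]; linarith
      rw [hfl]
      push_cast
      rw [show x - 2*π*(0:ℝ) = x by ring]
  have hPeqOn : Set.EqOn P g₀ (Set.Ioo (-(L/3)) (2*π)) := by
    intro y hy
    obtain ⟨hy1, hy2⟩ := hy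
    rcases lt_or_ge y 0 with hy0 | hy0
    · have hfl : ⌊y/(2*π)⌋ = -1 := by
        rw [Int.floor_eq_iff]
        constructor
        · push_cast
          rw [le_div_iff₀ h2π]
          nlinarith [hL2π]
        · push_cast
          rw [div_lt_iff₀ h2π]
          nlinarith
      rw [hfract y, hfl]
      push_cast
      rw [show y - 2*π*(-1:ℝ) = y + 2*π by ring]
      rw [hg₀right (y + 2*π) (by linarith), hg₀left y (by linarith)]
    · have hfl : ⌊y/(2*π)⌋ = 0 := by
        rw [Int.floor_eq_iff]
        constructor
        · push_cast; positivity
        · push_cast; rw [div_lt_iff₀ h2π]; linarith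
      rw [hfract y, hfl]
      push_cast
      rw [show y - 2*π*(0:ℝ) = y by ring]
  -- Step 8 : the derivative G
  have hiDeq : Set.EqOn (iteratedDeriv α P) (iteratedDeriv α g₀) (Set.Ioo (-(L/3)) (2*π)) :=
    hPeqOn.iteratedDeriv_of_isOpen isOpen_Ioo α
  set G : ℝ → ℂ := iteratedDeriv α P with hGdef
  have hGc : Continuous G := hPsm.continuous_iteratedDeriv α (coe_le_inf α)
  have hGper : Function.Periodic G (2*π) := periodic_iD P (2*π) hPper α
  have hGF : deriv (iteratedDeriv (α-1) P) = G := by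
    have e : α - 1 + 1 = α := Nat.succ_pred_eq_of_pos hα
    calc deriv (iteratedDeriv (α-1) P) = iteratedDeriv (α-1+1) P := (iteratedDeriv_succ).symm
      _ = G := by rw [e]
  have hFTC : ∀ x : ℝ, iteratedDeriv (α-1) P x
      = iteratedDeriv (α-1) P 0 + ∫ t in (0:ℝ)..x, G t := by
    intro x
    have hFtc := intervalIntegral.integral_deriv_eq_sub (f := iteratedDeriv (α-1) P)
      (a := 0) (b := x)
      (fun y _ => (hPsm.differentiable_iteratedDeriv (α-1) (coe_lt_inf _)).differentiableAt)
      (by rw [hGF]; exact hGc.intervalIntegrable 0 x)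
    rw [hGF] at hFtc
    rw [hFtc]
    ring
  haveI hfin : IsFiniteMeasure (volume.restrict (Set.Icc (0:ℝ) (2*π))) :=
    ⟨by rw [Measure.restrict_apply_univ, Real.volume_Icc]; exact ENNReal.ofReal_lt_top⟩
  obtain ⟨CG, hCG⟩ := isCompact_Icc.exists_bound_of_continuousOn
    (hGc.continuousOn (s := Set.Icc (0:ℝ) (2*π)))
  have hGmem : MemLp G q (volume.restrict (Set.Icc (0:ℝ) (2*π))) :=
    MemLp.of_bound hGc.aestronglyMeasurable.restrict CG
      ((ae_restrict_iff' hIcc).2 (Filter.Eventually.of_forall hCG))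
  -- Step 9 : cost of G
  have hiDg₀ : ∀ x, iteratedDeriv α g₀ x
      = ∑ i ∈ Finset.range N, iteratedDeriv α (τ i) x • c i := by
    intro x
    have h1 : iteratedDeriv α g₀ x
        = iteratedDeriv α (fun x => ∑ i ∈ Finset.range N, τ i x • c i) x := by
      rw [hg₀def]
      rw [← iteratedDerivWithin_univ, ← iteratedDerivWithin_univ]
      exact iteratedDerivWithin_const_add hα (v 0)
    rw [h1, iD_sum α N (fun i x => τ i x • c i) (fun i => (hτsm i).smul contDiff_const)]
    exact Finset.sum_congr rfl fun i _ => by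
      rw [iD_smul_const α (τ i) (hτsm i) (c i)]
  have stepG : (∫⁻ x in Set.Icc (0:ℝ) (2*π), (‖G x‖₊:ℝ≥0∞)^p) ≤ ENNReal.ofReal B := by
    have e0 : (∫⁻ x in Set.Icc (0:ℝ) (2*π), (‖G x‖₊:ℝ≥0∞)^p)
        = ∫⁻ x in Set.Ioo (0:ℝ) (2*π), (‖G x‖₊:ℝ≥0∞)^p :=
      (setLIntegral_congr Ioo_ae_eq_Icc).symm
    have e1 : (∫⁻ x in Set.Ioo (0:ℝ) (2*π), (‖G x‖₊:ℝ≥0∞)^p)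
        = ∫⁻ x in Set.Ioo (0:ℝ) (2*π), (‖iteratedDeriv α g₀ x‖₊:ℝ≥0∞)^p :=
      setLIntegral_congr_fun measurableSet_Ioo (fun x hx => by
        rw [hiDeq ⟨by linarith [hx.1, hL0], hx.2⟩])
    rw [e0, e1]
    have percost : ∀ i, (∫⁻ x in Set.Ioo (0:ℝ) (2*π),
        (‖iteratedDeriv α (τ i) x • c i‖₊:ℝ≥0∞)^p) ≤ ENNReal.ofReal ((2*M)^p * ε') := by
      intro i
      have hτic : Continuous (iteratedDeriv α (τ i)) :=
        (hτsm i).continuous_iteratedDeriv α (coe_le_inf α)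
      calc (∫⁻ x in Set.Ioo (0:ℝ) (2*π), (‖iteratedDeriv α (τ i) x • c i‖₊:ℝ≥0∞)^p)
          = ∫⁻ x in Set.Ioo (0:ℝ) (2*π),
              (‖c i‖₊:ℝ≥0∞)^p * (‖iteratedDeriv α (τ i) x‖₊:ℝ≥0∞)^p := by
            apply lintegral_congr
            intro x
            rw [nnnorm_smul, ENNReal.coe_mul,
              ENNReal.mul_rpow_of_nonneg _ _ hp0.le, mul_comm]
        _ = (‖c i‖₊:ℝ≥0∞)^p * ∫⁻ x in Set.Ioo (0:ℝ) (2*π),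
              (‖iteratedDeriv α (τ i) x‖₊:ℝ≥0∞)^p := by
            rw [lintegral_const_mul]
            exact hτic.measurable.nnnorm.coe_nnreal_ennreal.pow_const p
        _ ≤ ENNReal.ofReal ((2*M)^p) * ENNReal.ofReal ε' := by
            apply mul_le_mul'
            · rw [← enorm_eq_nnnorm, ← ofReal_norm]
              refine le_trans (ENNReal.rpow_le_rpow
                (ENNReal.ofReal_le_ofReal (hcbound i)) hp0.le) ?_
              rw [ENNReal.ofReal_rpow_of_pos (by linarith)]
            · exact le_trans (lintegral_mono' Measure.restrict_le_self (le_refl _)) (hτcost i)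
        _ = ENNReal.ofReal ((2*M)^p * ε') := by
            rw [ENNReal.ofReal_mul (by positivity)]
    calc (∫⁻ x in Set.Ioo (0:ℝ) (2*π), (‖iteratedDeriv α g₀ x‖₊:ℝ≥0∞)^p)
        ≤ ∫⁻ x in Set.Ioo (0:ℝ) (2*π),
            ∑ i ∈ Finset.range N, (‖iteratedDeriv α (τ i) x • c i‖₊:ℝ≥0∞)^p := by
          apply lintegral_mono
          intro x
          dsimp only
          rw [hiDg₀ x]
          exact enorm_sum_rpow hp0 hp1.le N _
      _ = ∑ i ∈ Finset.range N, ∫⁻ x in Set.Ioo (0:ℝ) (2*π),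
            (‖iteratedDeriv α (τ i) x • c i‖₊:ℝ≥0∞)^p := by
          apply lintegral_finset_sum
          intro i _
          apply Measurable.pow_const
          apply Measurable.coe_nnreal_ennreal
          apply Measurable.nnnorm
          exact (((hτsm i).continuous_iteratedDeriv α (coe_le_inf α)).smul
            continuous_const).measurable
      _ ≤ ∑ _i ∈ Finset.range N, ENNReal.ofReal ((2*M)^p * ε') :=
          Finset.sum_le_sum fun i _ => percost i
      _ = (N:ℝ≥0∞) * ENNReal.ofReal ((2*M)^p * ε') := by
          rw [Finset.sum_const, Finset.card_range, nsmul_eq_mul]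
      _ = ENNReal.ofReal ((N:ℝ) * ((2*M)^p * ε')) := by
          rw [← ENNReal.ofReal_natCast N, ← ENNReal.ofReal_mul (by positivity)]
      _ ≤ ENNReal.ofReal B := by
          apply ENNReal.ofReal_le_ofReal
          rw [hε'def]
          rw [show (N:ℝ) * ((2*M)^p * (B/(N*(2*M)^p+1)))
            = B * ((N*(2*M)^p)/(N*(2*M)^p+1)) by ring]
          apply mul_le_of_le_one_right hB.le
          rw [div_le_one (by positivity)]
          linarith
  -- Step 10 : conclusion
  have hconv : ∀ (F : ℝ → ℂ) (aa : ℝ), 0 < aa →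
      (∫⁻ x in Set.Icc (0:ℝ) (2*π), (‖F x‖₊:ℝ≥0∞)^p) ≤ ENNReal.ofReal (aa^p) →
      eLpNorm F q (volume.restrict (Set.Icc (0:ℝ) (2*π))) ≤ ENNReal.ofReal aa := by
    intro F aa haa hle
    rw [hq, eLpNorm_eq_lintegral_rpow_enorm_toReal hq0 hqt, ENNReal.toReal_ofReal hp0.le]
    calc (∫⁻ x in Set.Icc (0:ℝ) (2*π), (‖F x‖₊:ℝ≥0∞)^p) ^ (1/p)
        ≤ (ENNReal.ofReal (aa^p)) ^ (1/p) :=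
          ENNReal.rpow_le_rpow hle (by positivity)
      _ = ENNReal.ofReal aa := by
          rw [ENNReal.ofReal_rpow_of_pos (Real.rpow_pos_of_pos haa p),
            ← Real.rpow_mul haa.le, mul_one_div_cancel hp0.ne', Real.rpow_one]
  have hfinal1 : eLpNorm (fun x => f x - P x) q (volume.restrict (Set.Icc (0:ℝ) (2*π)))
      ≤ ENNReal.ofReal a0 := by
    apply hconv _ a0 ha0
    rw [← hAdef]
    calc (∫⁻ x in Set.Icc (0:ℝ) (2*π), (‖f x - P x‖₊:ℝ≥0∞)^p)
        = ∫⁻ x in Set.Icc (0:ℝ) (2*π), (‖f x - g₀ x‖₊:ℝ≥0∞)^p :=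
          setLIntegral_congr_fun hIcc (fun x hx => by
            rw [hPeq x hx])
      _ ≤ ENNReal.ofReal A := stepfg
  have hfinal2 : eLpNorm G q (volume.restrict (Set.Icc (0:ℝ) (2*π)))
      ≤ ENNReal.ofReal b0 := by
    apply hconv _ b0 hb0
    rw [← hBdef]
    exact stepG
  refine ⟨P, G, hPper, hGper, hGc.integrableOn_Icc, hPsm.of_le (coe_le_inf (α-1)),
    hGmem, hFTC, ?_⟩
  calc eLpNorm (fun x => f x - P x) q (volume.restrict (Set.Icc (0:ℝ) (2*π)))
      + ENNReal.ofReal δ * eLpNorm G q (volume.restrict (Set.Icc (0:ℝ) (2*π)))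
      ≤ ENNReal.ofReal a0 + ENNReal.ofReal δ * ENNReal.ofReal b0 :=
        add_le_add hfinal1 (mul_le_mul_right hfinal2 _)
    _ = ENNReal.ofReal (a0 + δ * b0) := by
        rw [← ENNReal.ofReal_mul hδ.le, ← ENNReal.ofReal_add ha0.le (by positivity)]
    _ < ENNReal.ofReal ε := by
        rw [ENNReal.ofReal_lt_ofReal_iff hε]
        have e1 : δ * b0 = ε/3 := by
          rw [hb0def]
          field_simp
        rw [ha0def, e1]
        linarith
end
end
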